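/- arXiv:1312.5118 — 5 statements merged into one kernel-verified Lean document; each statement's English description precedes it below -/
import Mathlib

section
/- Let μ be a positive Borel measure on an open set G ⊂ ℝⁿ with μ(G) < ∞, let 0 < δ < 1, 0 < τ ≤ ∞, and 0 < p ≤ q < ∞ (with the convention B(y, τ·dist(y,∂G)) := ℝⁿ when τ = ∞). Then the following are equivalent: (A) there is a constant C₁ > 0 such that for every u ∈ L^∞(G; μ), inf_{a ∈ ℝ} sup_{t > 0} μ({x ∈ G : |u(x) − a| > t}) · t^q ≤ C₁ ( ∫_G ∫_{G ∩ B(y, τ·dist(y,∂G))} |u(y) − u(z)|^p / |y − z|^{n+δp} dμ(z) dμ(y) )^{q/p}; (B) there is a constant C₂ > 0 such that for every u ∈ L¹(G; μ), inf_{a ∈ ℝ} ∫_G |u(x) − a|^q dμ(x) ≤ C₂ ( ∫_G ∫_{G ∩ B(y, τ·dist(y,∂G))} |u(y) − u(z)|^p / |y − z|^{n+δp} dμ(z) dμ(y) )^{q/p}. Moreover, in the implication from (A) to (B) one may take C₂ = C(p,q)·C₁ with C(p,q) depending only on p and q, and in the converse implication C₁ = C₂. -/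
open MeasureTheory Metric Set ENNReal

/-- The fractional energy
`∫_G ∫_{G ∩ B(y, τ·dist(y,∂G))} |u(y) − u(z)|^p / |y − z|^{n+δp} dμ(z) dμ(y)`,
with the convention that `B(y, τ·dist(y,∂G)) = ℝⁿ` when `τ = ∞`. -/
noncomputable def fracEnergy {n : ℕ} (G : Set (EuclideanSpace ℝ (Fin n)))
    (μ : Measure (EuclideanSpace ℝ (Fin n))) (τ : ℝ≥0∞) (δ p : ℝ)
    (u : EuclideanSpace ℝ (Fin n) → ℝ) : ℝ≥0∞ :=
  ∫⁻ y in G,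
    (∫⁻ z in G ∩ (if τ = ∞ then Set.univ
        else Metric.ball y (τ.toReal * Metric.infDist y (frontier G))),
      ENNReal.ofReal (|u y - u z| ^ p / dist y z ^ ((n : ℝ) + δ * p)) ∂μ) ∂μ

/-- Condition (A): the weak type improved fractional Poincaré inequality with constant `C₁`,
for all `u ∈ L^∞(G; μ)`. -/
def WeakTypeFracPoincare {n : ℕ} (G : Set (EuclideanSpace ℝ (Fin n)))
    (μ : Measure (EuclideanSpace ℝ (Fin n))) (τ : ℝ≥0∞) (δ p q : ℝ) (C₁ : ℝ) : Prop :=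
  ∀ u : EuclideanSpace ℝ (Fin n) → ℝ, MemLp u ⊤ (μ.restrict G) →
    (⨅ a : ℝ, ⨆ t : ℝ, ⨆ _ : 0 < t,
        μ {x ∈ G | t < |u x - a|} * ENNReal.ofReal (t ^ q)) ≤
      ENNReal.ofReal C₁ * (fracEnergy G μ τ δ p u) ^ (q / p)

/-- Condition (B): the strong type improved fractional Poincaré inequality with constant `C₂`,
for all `u ∈ L¹(G; μ)`. -/
def StrongTypeFracPoincare {n : ℕ} (G : Set (EuclideanSpace ℝ (Fin n)))
    (μ : Measure (EuclideanSpace ℝ (Fin n))) (τ : ℝ≥0∞) (δ p q : ℝ) (C₂ : ℝ) : Prop :=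
  ∀ u : EuclideanSpace ℝ (Fin n) → ℝ, Integrable u (μ.restrict G) →
    (⨅ a : ℝ, ∫⁻ x in G, ENNReal.ofReal (|u x - a| ^ q) ∂μ) ≤
      ENNReal.ofReal C₂ * (fracEnergy G μ τ δ p u) ^ (q / p)


section AuxLemmas

open Filter Topology

section AuxGeneral

variable {α : Type*} {mα : MeasurableSpace α} {μ : Measure α}

lemma sum_lintegral_le' {ι : Type*} (F : Finset ι) (f : ι → α → ℝ≥0∞) :
    ∑ k ∈ F, ∫⁻ x, f k x ∂μ ≤ ∫⁻ x, ∑ k ∈ F, f k x ∂μ := by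
  classical
  induction F using Finset.induction_on with
  | empty => simp
  | @insert a F ha ih =>
    rw [Finset.sum_insert ha]
    calc ∫⁻ x, f a x ∂μ + ∑ k ∈ F, ∫⁻ x, f k x ∂μ
        ≤ ∫⁻ x, f a x ∂μ + ∫⁻ x, ∑ k ∈ F, f k x ∂μ := add_le_add_right ih _
      _ ≤ ∫⁻ x, (f a x + ∑ k ∈ F, f k x) ∂μ := le_lintegral_add _ _
      _ = ∫⁻ x, ∑ k ∈ insert a F, f k x ∂μ := by
          simp [Finset.sum_insert ha]

lemma tsum_rpow_le' {ι : Type*} (f : ι → ℝ≥0∞) {r : ℝ} (hr : 1 ≤ r) :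
    ∑' k, (f k) ^ r ≤ (∑' k, f k) ^ r := by
  have hr0 : (0:ℝ) < r := lt_of_lt_of_le zero_lt_one hr
  set S := ∑' k, f k with hS
  rcases eq_or_ne S 0 with h0 | h0
  · have hf : ∀ k, f k = 0 := ENNReal.tsum_eq_zero.1 h0
    simp [hf, ENNReal.zero_rpow_of_pos hr0]
  rcases eq_or_ne S ∞ with htop | htop
  · rw [htop, ENNReal.top_rpow_of_pos hr0]; exact le_top
  have key : ∀ k, (f k) ^ r ≤ S ^ (r - 1) * f k := by
    intro k
    rcases eq_or_ne (f k) 0 with hk | hk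
    · rw [hk, ENNReal.zero_rpow_of_pos hr0]; exact zero_le
    · have hkfin : f k ≠ ∞ := ne_top_of_le_ne_top htop (ENNReal.le_tsum k)
      calc (f k) ^ r = (f k) ^ (r - 1) * (f k) ^ (1:ℝ) := by
            rw [← ENNReal.rpow_add _ _ hk hkfin]; norm_num
        _ ≤ S ^ (r - 1) * (f k) ^ (1:ℝ) :=
            mul_le_mul_left (ENNReal.rpow_le_rpow (ENNReal.le_tsum k) (by linarith)) _
        _ = S ^ (r - 1) * f k := by rw [ENNReal.rpow_one]
  calc ∑' k, (f k) ^ r ≤ ∑' k, S ^ (r - 1) * f k := ENNReal.tsum_le_tsum key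
    _ = S ^ (r - 1) * S := by rw [ENNReal.tsum_mul_left]
    _ = S ^ r := by
        nth_rewrite 2 [← ENNReal.rpow_one S]
        rw [← ENNReal.rpow_add _ _ h0 htop]; norm_num

lemma exists_median' (ν : Measure α) [IsFiniteMeasure ν] {f : α → ℝ} (hf : Measurable f) :
    ∃ b : ℝ, ν {x | b < f x} ≤ ν Set.univ / 2 ∧ ν {x | f x < b} ≤ ν Set.univ / 2 := by
  set M := ν Set.univ with hM
  by_cases hM0 : M = 0
  · refine ⟨0, ?_, ?_⟩ <;>
      exact le_trans (measure_mono (Set.subset_univ _)) (by simp [← hM, hM0])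
  have hMfin : M ≠ ∞ := measure_ne_top ν _
  have hhalf_pos : 0 < M / 2 := ENNReal.div_pos hM0 (by norm_num)
  have hhalf_ne_top : M / 2 ≠ ∞ :=
    (ENNReal.div_lt_top hMfin (by norm_num)).ne
  set S : Set ℝ := {c | ν {x | c < f x} ≤ M / 2} with hSdef
  have hmono : ∀ {c d : ℝ}, c ≤ d → ν {x | d < f x} ≤ ν {x | c < f x} :=
    fun h => measure_mono fun x hx => lt_of_le_of_lt h hx
  -- S is nonempty
  have h1 : Tendsto (fun n : ℕ => ν {x | (n:ℝ) < f x}) atTop (𝓝 0) := by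
    have hI : (⋂ n : ℕ, {x | (n:ℝ) < f x}) = ∅ := by
      refine Set.eq_empty_iff_forall_notMem.2 fun x hx => ?_
      obtain ⟨m, hm⟩ := exists_nat_gt (f x)
      exact absurd (Set.mem_iInter.1 hx m) (not_lt.2 hm.le)
    have := tendsto_measure_iInter_atTop (μ := ν) (s := fun n : ℕ => {x | (n:ℝ) < f x})
      (fun n => (measurableSet_lt measurable_const hf).nullMeasurableSet)
      (by
        intro n m hnm x hx
        simp only [Set.mem_setOf_eq] at hx ⊢
        have h' : (n:ℝ) ≤ m := Nat.cast_le.2 hnm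
        linarith)
      ⟨0, measure_ne_top _ _⟩
    rwa [hI, measure_empty] at this
  have hSne : S.Nonempty := by
    obtain ⟨m, hm⟩ := (h1.eventually_lt_const hhalf_pos).exists
    exact ⟨m, hm.le⟩
  -- bddBelow
  have h2 : Tendsto (fun n : ℕ => ν {x | f x < -(n:ℝ)}) atTop (𝓝 0) := by
    have hI : (⋂ n : ℕ, {x | f x < -(n:ℝ)}) = ∅ := by
      refine Set.eq_empty_iff_forall_notMem.2 fun x hx => ?_
      obtain ⟨m, hm⟩ := exists_nat_gt (-(f x))
      have := Set.mem_iInter.1 hx m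
      simp only [Set.mem_setOf_eq] at this
      linarith
    have := tendsto_measure_iInter_atTop (μ := ν) (s := fun n : ℕ => {x | f x < -(n:ℝ)})
      (fun n => (measurableSet_lt hf measurable_const).nullMeasurableSet)
      (by
        intro n m hnm x hx
        simp only [Set.mem_setOf_eq] at hx ⊢
        have h' : (n:ℝ) ≤ m := Nat.cast_le.2 hnm
        linarith)
      ⟨0, measure_ne_top _ _⟩
    rwa [hI, measure_empty] at this
  obtain ⟨n₀, hn₀⟩ := (h2.eventually_lt_const hhalf_pos).exists
  have hsplit : ∀ c : ℝ, ν {x | c < f x} + ν {x | f x ≤ c} = M := by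
    intro c
    have h := measure_add_measure_compl (μ := ν) (measurableSet_lt (measurable_const (a := c)) hf)
    have hc : {a | c < f a}ᶜ = {x | f x ≤ c} := by ext x; simp [not_lt]
    rw [hc] at h
    rw [hM]
    exact h
  have hbdd : BddBelow S := by
    refine ⟨-(n₀:ℝ) - 1, fun c hc => ?_⟩
    by_contra hlt
    push_neg at hlt
    have habs : M < M := by
      calc M = ν {x | c < f x} + ν {x | f x ≤ c} := (hsplit c).symm
        _ ≤ M / 2 + ν {x | f x ≤ c} := add_le_add_left hc _
        _ ≤ M / 2 + ν {x | f x < -(n₀:ℝ)} := by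
            refine add_le_add_right (measure_mono fun x hx => ?_) _
            have hx' : f x ≤ c := hx
            exact lt_of_le_of_lt hx' (by linarith)
        _ < M / 2 + M / 2 := ENNReal.add_lt_add_left hhalf_ne_top hn₀
        _ = M := ENNReal.add_halves M
    exact absurd habs (lt_irrefl M)
  set b := sInf S with hb
  refine ⟨b, ?_, ?_⟩
  · -- ν {b < f} ≤ M/2
    have hU : {x | b < f x} = ⋃ n : ℕ, {x | b + 1/(n+1:ℝ) < f x} := by
      ext x
      simp only [Set.mem_setOf_eq, Set.mem_iUnion]
      constructor
      · intro h
        obtain ⟨m, hm⟩ := exists_nat_one_div_lt (sub_pos.2 h)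
        exact ⟨m, by push_cast at hm ⊢; linarith⟩
      · rintro ⟨m, hm⟩
        have : (0:ℝ) < 1/(m+1:ℝ) := by positivity
        linarith
    rw [hU]
    have hdir : Directed (· ⊆ ·) (fun n : ℕ => {x | b + 1/(n+1:ℝ) < f x}) := by
      refine (Monotone.directed_le fun n m hnm x hx => ?_)
      have : (1:ℝ)/(m+1) ≤ 1/(n+1) := by
        apply one_div_le_one_div_of_le (by positivity)
        have : (n:ℝ) ≤ m := Nat.cast_le.2 hnm
        push_cast; linarith
      simp only [Set.mem_setOf_eq] at hx ⊢
      linarith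
    rw [hdir.measure_iUnion]
    refine iSup_le fun m => ?_
    have hblt : b < b + 1/(m+1:ℝ) := by
      have : (0:ℝ) < 1/(m+1:ℝ) := by positivity
      linarith
    obtain ⟨c, hcS, hc⟩ := (csInf_lt_iff hbdd hSne).1 hblt
    exact le_trans (hmono hc.le) hcS
  · -- ν {f < b} ≤ M/2
    have hU : {x | f x < b} = ⋃ n : ℕ, {x | f x ≤ b - 1/(n+1:ℝ)} := by
      ext x
      simp only [Set.mem_setOf_eq, Set.mem_iUnion]
      constructor
      · intro h
        obtain ⟨m, hm⟩ := exists_nat_one_div_lt (sub_pos.2 h)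
        exact ⟨m, by push_cast at hm ⊢; linarith⟩
      · rintro ⟨m, hm⟩
        have : (0:ℝ) < 1/(m+1:ℝ) := by positivity
        linarith
    rw [hU]
    have hdir : Directed (· ⊆ ·) (fun n : ℕ => {x | f x ≤ b - 1/(n+1:ℝ)}) := by
      refine (Monotone.directed_le fun n m hnm x hx => ?_)
      have : (1:ℝ)/(m+1) ≤ 1/(n+1) := by
        apply one_div_le_one_div_of_le (by positivity)
        have : (n:ℝ) ≤ m := Nat.cast_le.2 hnm
        push_cast; linarith
      simp only [Set.mem_setOf_eq] at hx ⊢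
      linarith
    rw [hdir.measure_iUnion]
    refine iSup_le fun m => ?_
    set c := b - 1/(m+1:ℝ) with hcdef
    have hcnot : c ∉ S := by
      intro hcS
      have := csInf_le hbdd hcS
      have hpos : (0:ℝ) < 1/(m+1:ℝ) := by positivity
      rw [← hb] at this
      simp only [hcdef] at this
      linarith
    have h3 : M / 2 ≤ ν {x | c < f x} := (not_le.1 hcnot).le
    have h4 : ν {x | f x ≤ c} + M / 2 ≤ M / 2 + M / 2 := by
      calc ν {x | f x ≤ c} + M / 2 ≤ ν {x | f x ≤ c} + ν {x | c < f x} := add_le_add_right h3 _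
        _ = M := by rw [add_comm]; exact hsplit c
        _ = M / 2 + M / 2 := (ENNReal.add_halves M).symm
    exact (ENNReal.add_le_add_iff_right hhalf_ne_top).1 h4

end AuxGeneral

section Trunc

/-- dyadic truncation at level `k`. -/
noncomputable def dyadicTrunc (k : ℤ) (x : ℝ) : ℝ := min (max (x - 2 ^ k) 0) (2 ^ k)

lemma dyadicTrunc_nonneg (k : ℤ) (x : ℝ) : 0 ≤ dyadicTrunc k x :=
  le_min (le_max_right _ _) (zpow_pos two_pos k).le

lemma dyadicTrunc_le (k : ℤ) (x : ℝ) : dyadicTrunc k x ≤ 2 ^ k := min_le_right _ _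

lemma dyadicTrunc_eq_zero {k : ℤ} {x : ℝ} (h : x ≤ 2 ^ k) : dyadicTrunc k x = 0 := by
  unfold dyadicTrunc
  rw [max_eq_right (sub_nonpos.2 h), min_eq_left (zpow_pos two_pos k).le]

lemma dyadicTrunc_eq_top {k : ℤ} {x : ℝ} (h : (2:ℝ) ^ (k + 1) ≤ x) : dyadicTrunc k x = 2 ^ k := by
  unfold dyadicTrunc
  have h2 : (2:ℝ) ^ (k+1) = 2 ^ k + 2 ^ k := by rw [zpow_add_one₀ (two_ne_zero)]; ring
  have h1 : (2:ℝ) ^ k ≤ x - 2 ^ k := by linarith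
  rw [max_eq_left (by linarith [zpow_pos (two_pos (α := ℝ)) k] : (0:ℝ) ≤ x - 2 ^ k),
    min_eq_right h1]

lemma abs_dyadicTrunc_sub_le (k : ℤ) (a b : ℝ) :
    |dyadicTrunc k a - dyadicTrunc k b| ≤ |a - b| := by
  unfold dyadicTrunc
  calc |min (max (a - 2 ^ k) 0) (2 ^ k) - min (max (b - 2 ^ k) 0) (2 ^ k)|
      ≤ max |max (a - 2 ^ k) 0 - max (b - 2 ^ k) 0| |(2:ℝ) ^ k - 2 ^ k| :=
        abs_min_sub_min_le_max _ _ _ _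
    _ = |max (a - 2 ^ k) 0 - max (b - 2 ^ k) 0| := by simp
    _ ≤ |(a - 2 ^ k) - (b - 2 ^ k)| := abs_max_sub_max_le_abs _ _ _
    _ = |a - b| := by ring_nf

lemma abs_dyadicTrunc_sub_le' (k : ℤ) (a b : ℝ) :
    |dyadicTrunc k a - dyadicTrunc k b| ≤ 2 ^ k := by
  rw [abs_sub_le_iff]
  constructor <;>
    nlinarith [dyadicTrunc_nonneg k a, dyadicTrunc_nonneg k b, dyadicTrunc_le k a,
      dyadicTrunc_le k b]

/-- the key truncation summation lemma. -/
lemma dyadicTrunc_sum_le {p : ℝ} (hp : 0 < p) (F : Finset ℤ) (a b : ℝ) :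
    ∑ k ∈ F, |dyadicTrunc k a - dyadicTrunc k b| ^ p
      ≤ (2 + (1 - ((2:ℝ) ^ p)⁻¹)⁻¹) * |a - b| ^ p := by
  classical
  have h2p : (1:ℝ) < 2 ^ p := by
    rw [show (1:ℝ) = (2:ℝ) ^ (0:ℝ) by simp]
    exact Real.rpow_lt_rpow_left_iff (by norm_num) |>.2 hp
  set r : ℝ := ((2:ℝ) ^ p)⁻¹ with hr
  have hrlt : r < 1 := inv_lt_one_of_one_lt₀ h2p
  have hrpos : (0:ℝ) < r := by positivity
  have hCg_pos : (0:ℝ) < (1 - r)⁻¹ := by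
    apply inv_pos.2; linarith
  set d := |a - b| with hd
  rcases eq_or_lt_of_le (abs_nonneg (a - b)) with hd0 | hd0
  · -- d = 0
    have hab : a = b := by
      have := hd0.symm
      rwa [abs_eq_zero, sub_eq_zero] at this
    subst hab
    simp only [sub_self, abs_zero, Real.zero_rpow hp.ne', Finset.sum_const_zero, ← hd]
    positivity
  -- d > 0
  rw [← hd] at hd0
  rw [← Finset.sum_filter_add_sum_filter_not F (fun k => (2:ℝ) ^ k ≤ d)]
  have habs : ∀ k, |dyadicTrunc k a - dyadicTrunc k b| ≤ d := fun k => abs_dyadicTrunc_sub_le k a b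
  have part1 : ∑ k ∈ F.filter (fun k => (2:ℝ) ^ k ≤ d),
      |dyadicTrunc k a - dyadicTrunc k b| ^ p ≤ (1 - r)⁻¹ * d ^ p := by
    set K := Int.log 2 d with hK
    have hdK : (2:ℝ) ^ K ≤ d := by
      have := Int.zpow_log_le_self (b := 2) (by norm_num) hd0
      simpa using this
    have hkK : ∀ k ∈ F.filter (fun k => (2:ℝ) ^ k ≤ d), k ≤ K := by
      intro k hk
      have hkd : (2:ℝ) ^ k ≤ d := (Finset.mem_filter.1 hk).2
      rw [hK]
      exact (Int.zpow_le_iff_le_log (b := 2) (by norm_num) hd0).1 (by simpa using hkd)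
    calc ∑ k ∈ F.filter (fun k => (2:ℝ) ^ k ≤ d), |dyadicTrunc k a - dyadicTrunc k b| ^ p
        ≤ ∑ k ∈ F.filter (fun k => (2:ℝ) ^ k ≤ d), ((2:ℝ) ^ k) ^ p := by
          refine Finset.sum_le_sum fun k hk => ?_
          exact Real.rpow_le_rpow (abs_nonneg _) (abs_dyadicTrunc_sub_le' k a b) hp.le
      _ = ∑ k ∈ F.filter (fun k => (2:ℝ) ^ k ≤ d), ((2:ℝ) ^ K) ^ p * r ^ ((K - k).toNat) := by
          refine Finset.sum_congr rfl fun k hk => ?_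
          have hkK' := hkK k hk
          have hm : ((K - k).toNat : ℤ) = K - k := Int.toNat_of_nonneg (by omega)
          have hmr : ((K - k).toNat : ℝ) = (K:ℝ) - k := by exact_mod_cast congrArg (Int.cast : ℤ → ℝ) hm
          have e1 : ((2:ℝ) ^ (k:ℤ)) = (2:ℝ) ^ ((k:ℤ):ℝ) := (Real.rpow_intCast 2 k).symm
          have e2 : ((2:ℝ) ^ (K:ℤ)) = (2:ℝ) ^ ((K:ℤ):ℝ) := (Real.rpow_intCast 2 K).symm
          rw [e1, e2, hr, ← Real.rpow_neg (by norm_num : (0:ℝ) ≤ 2) p,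
            ← Real.rpow_natCast ((2:ℝ) ^ (-p)) ((K - k).toNat),
            ← Real.rpow_mul (by norm_num : (0:ℝ) ≤ 2),
            ← Real.rpow_mul (by norm_num : (0:ℝ) ≤ 2),
            ← Real.rpow_mul (by norm_num : (0:ℝ) ≤ 2),
            ← Real.rpow_add (by norm_num : (0:ℝ) < 2)]
          congr 1
          rw [hmr]
          ring
      _ = ((2:ℝ) ^ K) ^ p * ∑ k ∈ F.filter (fun k => (2:ℝ) ^ k ≤ d), r ^ ((K - k).toNat) := by
          rw [Finset.mul_sum]
      _ = ((2:ℝ) ^ K) ^ p *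
          ∑ m ∈ (F.filter (fun k => (2:ℝ) ^ k ≤ d)).image (fun k => (K - k).toNat), r ^ m := by
          congr 1
          refine (Finset.sum_image ?_).symm
          intro x hx y hy hxy
          have hx' := hkK x hx
          have hy' := hkK y hy
          simp only at hxy
          omega
      _ ≤ ((2:ℝ) ^ K) ^ p * ∑' m : ℕ, r ^ m := by
          refine mul_le_mul_of_nonneg_left ?_ (by positivity)
          exact Summable.sum_le_tsum _ (fun i _ => by positivity)
            (summable_geometric_of_lt_one hrpos.le hrlt)
      _ = ((2:ℝ) ^ K) ^ p * (1 - r)⁻¹ := by rw [tsum_geometric_of_lt_one hrpos.le hrlt]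
      _ ≤ d ^ p * (1 - r)⁻¹ :=
          mul_le_mul_of_nonneg_right (Real.rpow_le_rpow (by positivity) hdK hp.le) (by positivity)
      _ = (1 - r)⁻¹ * d ^ p := mul_comm _ _
  have part2 : ∑ k ∈ F.filter (fun k => ¬ (2:ℝ) ^ k ≤ d),
      |dyadicTrunc k a - dyadicTrunc k b| ^ p ≤ 2 * d ^ p := by
    set L := Int.log 2 (max a b) with hL
    set S := (F.filter (fun k => ¬ (2:ℝ) ^ k ≤ d)).filter
      (fun k => dyadicTrunc k a ≠ dyadicTrunc k b) with hS
    have hsub : S ⊆ Finset.Icc (L - 1) L := by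
      intro k hk
      simp only [hS, Finset.mem_filter] at hk
      obtain ⟨⟨hkF, hkd⟩, hkne⟩ := hk
      push_neg at hkd
      have hM : (2:ℝ) ^ k < max a b := by
        by_contra hcon
        push_neg at hcon
        exact hkne (by rw [dyadicTrunc_eq_zero (le_trans (le_max_left a b) hcon),
          dyadicTrunc_eq_zero (le_trans (le_max_right a b) hcon)])
      have hm : min a b < (2:ℝ) ^ (k + 1) := by
        by_contra hcon
        push_neg at hcon
        exact hkne (by rw [dyadicTrunc_eq_top (le_trans hcon (min_le_left a b)),
          dyadicTrunc_eq_top (le_trans hcon (min_le_right a b))])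
      have hmaxmin : max a b - min a b = d := max_sub_min_eq_abs' a b
      have hub : max a b < (2:ℝ) ^ (k + 2) := by
        have e1 : (2:ℝ) ^ (k + 1) = 2 * 2 ^ k := by rw [zpow_add_one₀ two_ne_zero]; ring
        have e2 : (2:ℝ) ^ (k + 2) = 4 * 2 ^ k := by
          rw [show k + 2 = (k + 1) + 1 by ring, zpow_add_one₀ two_ne_zero, e1]; ring
        nlinarith [zpow_pos (two_pos (α := ℝ)) k]
      have hMpos : (0:ℝ) < max a b := lt_trans (zpow_pos two_pos k) hM
      have h1 : k ≤ L := by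
        have h2' := Int.lt_zpow_succ_log_self (b := 2) (by norm_num) (max a b)
        have hlt : (2:ℝ) ^ k < (2:ℝ) ^ (L + 1) := lt_trans hM (by rw [hL]; simpa using h2')
        have := (zpow_lt_zpow_iff_right₀ (by norm_num : (1:ℝ) < 2)).1 hlt
        omega
      have h2 : L - 1 ≤ k := by
        have h1' := Int.zpow_log_le_self (b := 2) (by norm_num) hMpos
        have hlt : (2:ℝ) ^ L < (2:ℝ) ^ (k + 2) :=
          lt_of_le_of_lt (by rw [hL]; simpa using h1') hub
        have := (zpow_lt_zpow_iff_right₀ (by norm_num : (1:ℝ) < 2)).1 hlt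
        omega
      exact Finset.mem_Icc.2 ⟨h2, h1⟩
    calc ∑ k ∈ F.filter (fun k => ¬ (2:ℝ) ^ k ≤ d), |dyadicTrunc k a - dyadicTrunc k b| ^ p
        = ∑ k ∈ S, |dyadicTrunc k a - dyadicTrunc k b| ^ p := by
          refine (Finset.sum_subset (Finset.filter_subset _ _) fun k hk hknotin => ?_).symm
          simp only [hS, Finset.mem_filter, not_and] at hknotin
          have heq : dyadicTrunc k a = dyadicTrunc k b := by
            by_contra hne
            exact (hknotin (by simpa using hk)) hne
          rw [heq, sub_self, abs_zero, Real.zero_rpow hp.ne']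
      _ ≤ ∑ k ∈ S, d ^ p :=
          Finset.sum_le_sum fun k _ => Real.rpow_le_rpow (abs_nonneg _) (habs k) hp.le
      _ = (S.card : ℝ) * d ^ p := by rw [Finset.sum_const, nsmul_eq_mul]
      _ ≤ 2 * d ^ p := by
          refine mul_le_mul_of_nonneg_right ?_ (by positivity)
          have hcard : S.card ≤ 2 := by
            refine le_trans (Finset.card_le_card hsub) ?_
            rw [Int.card_Icc]
            omega
          exact_mod_cast hcard
  have hdp : (0:ℝ) ≤ d ^ p := by positivity
  have hfin : (2 + (1 - r)⁻¹) * d ^ p = (1 - r)⁻¹ * d ^ p + 2 * d ^ p := by ring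
  rw [hfin]
  exact add_le_add part1 part2

end Trunc

lemma fracEnergy_congr {n : ℕ} {G : Set (EuclideanSpace ℝ (Fin n))}
    {μ : Measure (EuclideanSpace ℝ (Fin n))} {τ : ℝ≥0∞} {δ p : ℝ}
    {u u' : EuclideanSpace ℝ (Fin n) → ℝ} (h : u =ᵐ[μ.restrict G] u') :
    fracEnergy G μ τ δ p u = fracEnergy G μ τ δ p u' := by
  unfold fracEnergy
  refine lintegral_congr_ae ?_
  filter_upwards [h] with y hy
  set S := (if τ = ∞ then Set.univ
      else Metric.ball y (τ.toReal * Metric.infDist y (frontier G))) with hSdef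
  have hSm : MeasurableSet S := by
    rw [hSdef]; split_ifs
    · exact MeasurableSet.univ
    · exact measurableSet_ball
  have hres : μ.restrict (G ∩ S) = (μ.restrict G).restrict S := by
    rw [Measure.restrict_restrict hSm, Set.inter_comm]
  have h' : u =ᵐ[μ.restrict (G ∩ S)] u' := by
    rw [hres]
    exact ae_restrict_of_ae h
  refine lintegral_congr_ae ?_
  filter_upwards [h'] with z hz
  rw [hy, hz]

lemma sep_eq_inter' {n : ℕ} (G : Set (EuclideanSpace ℝ (Fin n)))
    (P : EuclideanSpace ℝ (Fin n) → Prop) :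
    {x ∈ G | P x} = {x | P x} ∩ G := by
  ext x; constructor
  · rintro ⟨h1, h2⟩; exact ⟨h2, h1⟩
  · rintro ⟨h1, h2⟩; exact ⟨h2, h1⟩

lemma strong_to_weak' {n : ℕ} {G : Set (EuclideanSpace ℝ (Fin n))} (hG : IsOpen G)
    {μ : Measure (EuclideanSpace ℝ (Fin n))} (hμ : μ G < ∞) {τ : ℝ≥0∞} {δ p q C₂ : ℝ}
    (hq0 : 0 < q) (hB : StrongTypeFracPoincare G μ τ δ p q C₂) :
    WeakTypeFracPoincare G μ τ δ p q C₂ := by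
  intro u hu
  haveI : IsFiniteMeasure (μ.restrict G) :=
    ⟨by rwa [Measure.restrict_apply_univ]⟩
  have hint : Integrable u (μ.restrict G) := hu.integrable le_top
  refine le_trans (iInf_mono fun a => ?_) (hB u hint)
  refine iSup_le fun t => iSup_le fun ht => ?_
  have hmeas : AEMeasurable (fun x => ENNReal.ofReal (|u x - a| ^ q)) (μ.restrict G) := by
    have hφ : Measurable (fun s : ℝ => ENNReal.ofReal (|s - a| ^ q)) :=
      ENNReal.measurable_ofReal.comp (((measurable_id.sub_const a).abs).pow measurable_const)
    exact hφ.comp_aemeasurable hu.1.aemeasurable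
  calc μ {x ∈ G | t < |u x - a|} * ENNReal.ofReal (t ^ q)
      = ENNReal.ofReal (t ^ q) * (μ.restrict G) {x | t < |u x - a|} := by
        rw [Measure.restrict_apply' hG.measurableSet, mul_comm, sep_eq_inter']
    _ ≤ ENNReal.ofReal (t ^ q) *
        (μ.restrict G) {x | ENNReal.ofReal (t ^ q) ≤ ENNReal.ofReal (|u x - a| ^ q)} := by
        refine mul_le_mul_right (measure_mono fun x hx => ?_) _
        exact ENNReal.ofReal_le_ofReal (Real.rpow_le_rpow ht.le (le_of_lt hx) hq0.le)
    _ ≤ ∫⁻ x, ENNReal.ofReal (|u x - a| ^ q) ∂(μ.restrict G) :=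
        mul_meas_ge_le_lintegral₀ hmeas _
lemma weak_to_strong' {n : ℕ} {G : Set (EuclideanSpace ℝ (Fin n))} (hG : IsOpen G)
    {μ : Measure (EuclideanSpace ℝ (Fin n))} (hμ : μ G < ∞) {τ : ℝ≥0∞} {δ p q C₁ : ℝ}
    (hp : 0 < p) (hpq : p ≤ q) (hA : WeakTypeFracPoincare G μ τ δ p q C₁) :
    StrongTypeFracPoincare G μ τ δ p q
      (2 * 32 ^ q * (2 + (1 - ((2:ℝ) ^ p)⁻¹)⁻¹) ^ (q / p) * C₁) := by
  have hq0 : 0 < q := lt_of_lt_of_le hp hpq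
  have h2p : (1:ℝ) < 2 ^ p := by
    rw [show (1:ℝ) = (2:ℝ) ^ (0:ℝ) by simp]
    exact Real.rpow_lt_rpow_left_iff (by norm_num) |>.2 hp
  set Cp : ℝ := 2 + (1 - ((2:ℝ) ^ p)⁻¹)⁻¹ with hCpdef
  have hCp : 0 < Cp := by
    have : (0:ℝ) < (1 - ((2:ℝ) ^ p)⁻¹)⁻¹ := by
      apply inv_pos.2
      have : ((2:ℝ) ^ p)⁻¹ < 1 := inv_lt_one_of_one_lt₀ h2p
      linarith
    rw [hCpdef]; linarith
  intro u hu
  have hGm : MeasurableSet G := hG.measurableSet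
  set ν := μ.restrict G with hν
  haveI : IsFiniteMeasure ν := ⟨by rw [hν, Measure.restrict_apply_univ]; exact hμ⟩
  obtain ⟨u', hu'meas, hu'ae⟩ : ∃ u', Measurable u' ∧ u =ᵐ[ν] u' := by
    have h := hu.1.aemeasurable
    exact ⟨h.mk u, h.measurable_mk, h.ae_eq_mk⟩
  have hE : fracEnergy G μ τ δ p u = fracEnergy G μ τ δ p u' := fracEnergy_congr hu'ae
  obtain ⟨b, hb1, hb2⟩ := exists_median' ν hu'meas
  set M := ν Set.univ with hM
  have hM2top : M / 2 ≠ ∞ := (ENNReal.div_lt_top (measure_ne_top ν _) (by norm_num)).ne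
  have hset : ∀ P : EuclideanSpace ℝ (Fin n) → Prop,
      μ {x ∈ G | P x} = ν {x | P x} := fun P => by
    rw [sep_eq_inter' G P, hν, Measure.restrict_apply' hGm]
  -- the main estimate, for one nonnegative piece
  have piece : ∀ v : EuclideanSpace ℝ (Fin n) → ℝ, Measurable v → (∀ x, 0 ≤ v x) →
      (∀ y z, |v y - v z| ≤ |u' y - u' z|) → ν {x | 0 < v x} ≤ M / 2 →
      ∫⁻ x, ENNReal.ofReal (v x ^ q) ∂ν ≤
        ENNReal.ofReal (32 ^ q * Cp ^ (q / p) * C₁) * (fracEnergy G μ τ δ p u') ^ (q / p) := by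
    intro v hv hvnn hvlip hv0
    -- weak-type bound applied to each truncation
    have hwk : ∀ k : ℤ, ν {x | (2:ℝ) ^ (k+1) < v x} * ENNReal.ofReal (((2:ℝ) ^ (k-2)) ^ q)
        ≤ ENNReal.ofReal C₁ *
          (fracEnergy G μ τ δ p (fun x => dyadicTrunc k (v x))) ^ (q / p) := by
      intro k
      have hvk_meas : Measurable (fun x => dyadicTrunc k (v x)) :=
        ((hv.sub_const _).max measurable_const).min measurable_const
      have hvk_mem : MemLp (fun x => dyadicTrunc k (v x)) ⊤ ν :=
        memLp_top_of_bound hvk_meas.aestronglyMeasurable ((2:ℝ) ^ k)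
          (ae_of_all _ fun x => by
            rw [Real.norm_eq_abs, abs_of_nonneg (dyadicTrunc_nonneg _ _)]
            exact dyadicTrunc_le _ _)
      refine le_trans (le_iInf fun a => ?_) (hA _ hvk_mem)
      set t := (2:ℝ) ^ (k-2) with htdef
      have ht : 0 < t := zpow_pos two_pos _
      refine le_trans ?_ (le_iSup_of_le t (le_iSup_of_le ht le_rfl))
      refine mul_le_mul_left ?_ _
      rw [hset]
      have e1 : (2:ℝ) ^ k = 2 ^ (k-1) * 2 := by
        rw [← zpow_add_one₀ (two_ne_zero (α := ℝ))]; congr 1; omega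
      have e2 : (2:ℝ) ^ (k-1) = 2 ^ (k-2) * 2 := by
        rw [← zpow_add_one₀ (two_ne_zero (α := ℝ))]; congr 1; omega
      have hpos2 : (0:ℝ) < 2 ^ (k-2) := zpow_pos two_pos _
      rcases lt_or_ge a ((2:ℝ) ^ (k-1)) with ha | ha
      · refine measure_mono fun x hx => ?_
        have hx' : (2:ℝ) ^ (k+1) < v x := hx
        have htr : dyadicTrunc k (v x) = 2 ^ k := dyadicTrunc_eq_top hx'.le
        simp only [Set.mem_setOf_eq, htr]
        have hlt : t < 2 ^ k - a := by rw [htdef]; linarith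
        exact lt_of_lt_of_le hlt (le_abs_self _)
      · have hsub1 : {x | (2:ℝ) ^ (k+1) < v x} ⊆ {x | 0 < v x} := by
          intro x hx
          simp only [Set.mem_setOf_eq] at hx ⊢
          exact lt_trans (zpow_pos two_pos _) hx
        have h1 : ν {x | (2:ℝ) ^ (k+1) < v x} ≤ M / 2 := le_trans (measure_mono hsub1) hv0
        have h2 : M / 2 ≤ ν {x | v x ≤ (2:ℝ) ^ k} := by
          have hcompl := measure_add_measure_compl (μ := ν)
            (measurableSet_le hv measurable_const : MeasurableSet {x | v x ≤ (2:ℝ) ^ k})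
          have hc : {x | v x ≤ (2:ℝ) ^ k}ᶜ ⊆ {x | 0 < v x} := by
            intro x hx
            simp only [Set.mem_compl_iff, Set.mem_setOf_eq, not_le] at hx
            simp only [Set.mem_setOf_eq]
            exact lt_trans (zpow_pos two_pos k) hx
          have h3 : ν ({x | v x ≤ (2:ℝ) ^ k}ᶜ) ≤ M / 2 := le_trans (measure_mono hc) hv0
          have h4 : M / 2 + M / 2 ≤ ν {x | v x ≤ (2:ℝ) ^ k} + M / 2 := by
            rw [ENNReal.add_halves]
            calc M = _ := (hM ▸ hcompl).symm
              _ ≤ ν {x | v x ≤ (2:ℝ) ^ k} + M / 2 := add_le_add_right h3 _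
          exact (ENNReal.add_le_add_iff_right hM2top).1 h4
        have hsub2 : {x | v x ≤ (2:ℝ) ^ k} ⊆
            {x | t < |dyadicTrunc k (v x) - a|} := by
          intro x hx
          have htr : dyadicTrunc k (v x) = 0 := dyadicTrunc_eq_zero hx
          simp only [Set.mem_setOf_eq, htr, zero_sub, abs_neg]
          rw [abs_of_nonneg (le_trans (zpow_pos (two_pos (α := ℝ)) (k-1)).le ha), htdef]
          linarith
        exact le_trans h1 (le_trans h2 (measure_mono hsub2))
    -- layer-cake estimate
    have hlayer : ∫⁻ x, ENNReal.ofReal (v x ^ q) ∂ν ≤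
        ENNReal.ofReal ((4:ℝ) ^ q) *
          ∑' j : ℤ, ENNReal.ofReal (((2:ℝ) ^ j) ^ q) * ν {x | (2:ℝ) ^ j < v x} := by
      have hpt : ∀ x, ENNReal.ofReal (v x ^ q) ≤
          ∑' j : ℤ, ({x | (2:ℝ) ^ j < v x}.indicator
            (fun _ => ENNReal.ofReal ((4:ℝ) ^ q * ((2:ℝ) ^ j) ^ q)) x) := by
        intro x
        rcases eq_or_lt_of_le (hvnn x) with h0 | h0
        · rw [← h0, Real.zero_rpow hq0.ne']; simp
        · set j := Int.log 2 (v x) - 1 with hj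
          refine le_trans ?_ (ENNReal.le_tsum j)
          have hmem : x ∈ {x | (2:ℝ) ^ j < v x} := by
            simp only [Set.mem_setOf_eq]
            have h1 : (2:ℝ) ^ (j+1) ≤ v x := by
              rw [hj, sub_add_cancel]
              have := Int.zpow_log_le_self (b := 2) (by norm_num) h0
              simpa using this
            have h2 : (2:ℝ) ^ j < 2 ^ (j+1) :=
              (zpow_lt_zpow_iff_right₀ (by norm_num : (1:ℝ) < 2)).2 (by omega)
            linarith
          rw [Set.indicator_of_mem hmem]
          refine ENNReal.ofReal_le_ofReal ?_
          have h2 : v x < (2:ℝ) ^ (j+2) := by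
            rw [hj, show Int.log 2 (v x) - 1 + 2 = Int.log 2 (v x) + 1 by ring]
            have := Int.lt_zpow_succ_log_self (b := 2) (by norm_num) (v x)
            simpa using this
          calc v x ^ q ≤ ((2:ℝ) ^ (j+2)) ^ q := Real.rpow_le_rpow (hvnn x) h2.le hq0.le
            _ = 4 ^ q * ((2:ℝ) ^ j) ^ q := by
                rw [← Real.mul_rpow (by norm_num) (zpow_nonneg (by norm_num) j)]
                congr 1
                rw [show j + 2 = j + 1 + 1 by ring, zpow_add_one₀ (two_ne_zero (α := ℝ)),
                  zpow_add_one₀ (two_ne_zero (α := ℝ))]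
                ring
      calc ∫⁻ x, ENNReal.ofReal (v x ^ q) ∂ν
          ≤ ∫⁻ x, (∑' j : ℤ, ({x | (2:ℝ) ^ j < v x}.indicator
              (fun _ => ENNReal.ofReal ((4:ℝ) ^ q * ((2:ℝ) ^ j) ^ q)) x)) ∂ν :=
            lintegral_mono hpt
        _ = ∑' j : ℤ, ∫⁻ x, ({x | (2:ℝ) ^ j < v x}.indicator
              (fun _ => ENNReal.ofReal ((4:ℝ) ^ q * ((2:ℝ) ^ j) ^ q)) x) ∂ν :=
            lintegral_tsum fun j =>
              (measurable_const.indicator (measurableSet_lt measurable_const hv)).aemeasurable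
        _ = ∑' j : ℤ, ENNReal.ofReal ((4:ℝ) ^ q * ((2:ℝ) ^ j) ^ q) * ν {x | (2:ℝ) ^ j < v x} := by
            refine tsum_congr fun j => ?_
            rw [lintegral_indicator (measurableSet_lt measurable_const hv), setLIntegral_const]
        _ = ENNReal.ofReal ((4:ℝ) ^ q) *
            ∑' j : ℤ, ENNReal.ofReal (((2:ℝ) ^ j) ^ q) * ν {x | (2:ℝ) ^ j < v x} := by
            rw [← ENNReal.tsum_mul_left]
            refine tsum_congr fun j => ?_
            rw [ENNReal.ofReal_mul (by positivity), mul_assoc]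
    -- per-level bound
    have hjbd : ∀ j : ℤ, ENNReal.ofReal (((2:ℝ) ^ j) ^ q) * ν {x | (2:ℝ) ^ j < v x} ≤
        ENNReal.ofReal ((8:ℝ) ^ q) * (ENNReal.ofReal C₁ *
          (fracEnergy G μ τ δ p (fun x => dyadicTrunc (j-1) (v x))) ^ (q / p)) := by
      intro j
      have h := hwk (j-1)
      rw [show j - 1 + 1 = j by ring, show j - 1 - 2 = j - 3 by ring] at h
      have h8 : ENNReal.ofReal (((2:ℝ) ^ j) ^ q)
          = ENNReal.ofReal ((8:ℝ) ^ q) * ENNReal.ofReal (((2:ℝ) ^ (j-3)) ^ q) := by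
        rw [← ENNReal.ofReal_mul (by positivity),
          ← Real.mul_rpow (by norm_num) (zpow_nonneg (by norm_num) _)]
        congr 2
        rw [show (8:ℝ) = (2:ℝ) ^ (3:ℤ) by norm_num, ← zpow_add₀ (two_ne_zero (α := ℝ))]
        congr 1; ring
      rw [h8, mul_assoc]
      refine mul_le_mul_right ?_ _
      rw [mul_comm]
      exact h
    -- summing the energies of the truncations
    have hsumE : ∑' k : ℤ, fracEnergy G μ τ δ p (fun x => dyadicTrunc k (v x))
        ≤ ENNReal.ofReal Cp * fracEnergy G μ τ δ p u' := by
      rw [ENNReal.tsum_eq_iSup_sum]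
      refine iSup_le fun F => ?_
      have hpoint : ∀ y z : EuclideanSpace ℝ (Fin n),
          ∑ k ∈ F, ENNReal.ofReal
            (|dyadicTrunc k (v y) - dyadicTrunc k (v z)| ^ p / dist y z ^ ((n:ℝ) + δ * p))
          ≤ ENNReal.ofReal Cp *
            ENNReal.ofReal (|u' y - u' z| ^ p / dist y z ^ ((n:ℝ) + δ * p)) := by
        intro y z
        set D := dist y z ^ ((n:ℝ) + δ * p) with hD
        have hDnn : 0 ≤ D := Real.rpow_nonneg dist_nonneg _
        rw [← ENNReal.ofReal_sum_of_nonneg (fun k _ => by positivity),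
          ← ENNReal.ofReal_mul hCp.le]
        refine ENNReal.ofReal_le_ofReal ?_
        rw [← Finset.sum_div]
        have key := dyadicTrunc_sum_le hp F (v y) (v z)
        have h2 : |v y - v z| ^ p ≤ |u' y - u' z| ^ p :=
          Real.rpow_le_rpow (abs_nonneg _) (hvlip y z) hp.le
        have h3 : ∑ k ∈ F, |dyadicTrunc k (v y) - dyadicTrunc k (v z)| ^ p
            ≤ Cp * |u' y - u' z| ^ p := by
          refine le_trans key ?_
          rw [← hCpdef]
          exact mul_le_mul_of_nonneg_left h2 hCp.le
        calc (∑ k ∈ F, |dyadicTrunc k (v y) - dyadicTrunc k (v z)| ^ p) / D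
            ≤ (Cp * |u' y - u' z| ^ p) / D := by
              rw [div_eq_mul_inv, div_eq_mul_inv]
              exact mul_le_mul_of_nonneg_right h3 (inv_nonneg.2 hDnn)
          _ = Cp * (|u' y - u' z| ^ p / D) := by ring
      unfold fracEnergy
      calc ∑ k ∈ F, ∫⁻ y in G, (∫⁻ z in G ∩ (if τ = ∞ then Set.univ
              else Metric.ball y (τ.toReal * Metric.infDist y (frontier G))),
            ENNReal.ofReal
              (|dyadicTrunc k (v y) - dyadicTrunc k (v z)| ^ p
                / dist y z ^ ((n:ℝ) + δ * p)) ∂μ) ∂μ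
          ≤ ∫⁻ y in G, (∑ k ∈ F, ∫⁻ z in G ∩ (if τ = ∞ then Set.univ
              else Metric.ball y (τ.toReal * Metric.infDist y (frontier G))),
            ENNReal.ofReal
              (|dyadicTrunc k (v y) - dyadicTrunc k (v z)| ^ p
                / dist y z ^ ((n:ℝ) + δ * p)) ∂μ) ∂μ := sum_lintegral_le' F _
        _ ≤ ∫⁻ y in G, ENNReal.ofReal Cp * (∫⁻ z in G ∩ (if τ = ∞ then Set.univ
              else Metric.ball y (τ.toReal * Metric.infDist y (frontier G))),
            ENNReal.ofReal (|u' y - u' z| ^ p / dist y z ^ ((n:ℝ) + δ * p)) ∂μ) ∂μ := by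
            refine lintegral_mono fun y => ?_
            calc ∑ k ∈ F, ∫⁻ z in G ∩ (if τ = ∞ then Set.univ
                  else Metric.ball y (τ.toReal * Metric.infDist y (frontier G))),
                ENNReal.ofReal
                  (|dyadicTrunc k (v y) - dyadicTrunc k (v z)| ^ p
                    / dist y z ^ ((n:ℝ) + δ * p)) ∂μ
                ≤ ∫⁻ z in G ∩ (if τ = ∞ then Set.univ
                  else Metric.ball y (τ.toReal * Metric.infDist y (frontier G))),
                  (∑ k ∈ F, ENNReal.ofReal
                    (|dyadicTrunc k (v y) - dyadicTrunc k (v z)| ^ p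
                      / dist y z ^ ((n:ℝ) + δ * p))) ∂μ := sum_lintegral_le' F _
              _ ≤ ∫⁻ z in G ∩ (if τ = ∞ then Set.univ
                  else Metric.ball y (τ.toReal * Metric.infDist y (frontier G))),
                  ENNReal.ofReal Cp *
                    ENNReal.ofReal (|u' y - u' z| ^ p / dist y z ^ ((n:ℝ) + δ * p)) ∂μ :=
                  lintegral_mono fun z => hpoint y z
              _ = ENNReal.ofReal Cp * ∫⁻ z in G ∩ (if τ = ∞ then Set.univ
                  else Metric.ball y (τ.toReal * Metric.infDist y (frontier G))),
                  ENNReal.ofReal (|u' y - u' z| ^ p / dist y z ^ ((n:ℝ) + δ * p)) ∂μ :=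
                  lintegral_const_mul' _ _ ENNReal.ofReal_ne_top
        _ = ENNReal.ofReal Cp * ∫⁻ y in G, (∫⁻ z in G ∩ (if τ = ∞ then Set.univ
              else Metric.ball y (τ.toReal * Metric.infDist y (frontier G))),
            ENNReal.ofReal (|u' y - u' z| ^ p / dist y z ^ ((n:ℝ) + δ * p)) ∂μ) ∂μ :=
            lintegral_const_mul' _ _ ENNReal.ofReal_ne_top
    -- put the pieces together
    have hqp1 : (1:ℝ) ≤ q / p := by rw [le_div_iff₀ hp]; linarith
    have hqpnn : (0:ℝ) ≤ q / p := le_trans zero_le_one hqp1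
    calc ∫⁻ x, ENNReal.ofReal (v x ^ q) ∂ν
        ≤ ENNReal.ofReal ((4:ℝ) ^ q) *
          ∑' j : ℤ, ENNReal.ofReal (((2:ℝ) ^ j) ^ q) * ν {x | (2:ℝ) ^ j < v x} := hlayer
      _ ≤ ENNReal.ofReal ((4:ℝ) ^ q) *
          ∑' j : ℤ, ENNReal.ofReal ((8:ℝ) ^ q) * (ENNReal.ofReal C₁ *
            (fracEnergy G μ τ δ p (fun x => dyadicTrunc (j-1) (v x))) ^ (q / p)) :=
          mul_le_mul_right (ENNReal.tsum_le_tsum hjbd) _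
      _ = ENNReal.ofReal ((4:ℝ) ^ q) * (ENNReal.ofReal ((8:ℝ) ^ q) * (ENNReal.ofReal C₁ *
            ∑' j : ℤ, (fracEnergy G μ τ δ p (fun x => dyadicTrunc (j-1) (v x))) ^ (q / p))) := by
          rw [ENNReal.tsum_mul_left, ENNReal.tsum_mul_left]
      _ = ENNReal.ofReal ((4:ℝ) ^ q) * (ENNReal.ofReal ((8:ℝ) ^ q) * (ENNReal.ofReal C₁ *
            ∑' k : ℤ, (fracEnergy G μ τ δ p (fun x => dyadicTrunc k (v x))) ^ (q / p))) := by
          congr 3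
          have := (Equiv.subRight (1:ℤ)).tsum_eq
            (fun k => (fracEnergy G μ τ δ p (fun x => dyadicTrunc k (v x))) ^ (q / p))
          simpa [Equiv.subRight] using this
      _ ≤ ENNReal.ofReal ((4:ℝ) ^ q) * (ENNReal.ofReal ((8:ℝ) ^ q) * (ENNReal.ofReal C₁ *
            (∑' k : ℤ, fracEnergy G μ τ δ p (fun x => dyadicTrunc k (v x))) ^ (q / p))) := by
          refine mul_le_mul_right (mul_le_mul_right (mul_le_mul_right ?_ _) _) _
          exact tsum_rpow_le' _ hqp1
      _ ≤ ENNReal.ofReal ((4:ℝ) ^ q) * (ENNReal.ofReal ((8:ℝ) ^ q) * (ENNReal.ofReal C₁ *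
            (ENNReal.ofReal Cp * fracEnergy G μ τ δ p u') ^ (q / p))) := by
          refine mul_le_mul_right (mul_le_mul_right (mul_le_mul_right ?_ _) _) _
          exact ENNReal.rpow_le_rpow hsumE hqpnn
      _ = ENNReal.ofReal (32 ^ q * Cp ^ (q / p) * C₁) * (fracEnergy G μ τ δ p u') ^ (q / p) := by
          have hm : (4:ℝ) ^ q * 8 ^ q = 32 ^ q := by
            rw [← Real.mul_rpow (by norm_num) (by norm_num)]; norm_num
          have hconst : ENNReal.ofReal (32 ^ q * Cp ^ (q / p) * C₁)
              = ENNReal.ofReal ((32:ℝ) ^ q) * ENNReal.ofReal (Cp ^ (q / p)) *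
                ENNReal.ofReal C₁ := by
            rw [ENNReal.ofReal_mul (by positivity), ENNReal.ofReal_mul (by positivity)]
          have h48 : ENNReal.ofReal ((4:ℝ) ^ q) * ENNReal.ofReal ((8:ℝ) ^ q)
              = ENNReal.ofReal ((32:ℝ) ^ q) := by
            rw [← ENNReal.ofReal_mul (by positivity), hm]
          rw [ENNReal.mul_rpow_of_nonneg _ _ hqpnn, ENNReal.ofReal_rpow_of_pos hCp, hconst,
            ← h48]
          ring
  -- apply the piece estimate to the positive and negative parts
  set v := fun x => max (u' x - b) 0 with hvdef
  set w := fun x => max (b - u' x) 0 with hwdef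
  have hvmeas : Measurable v := (hu'meas.sub_const b).max measurable_const
  have hwmeas : Measurable w := (measurable_const.sub hu'meas).max measurable_const
  have hvnn : ∀ x, 0 ≤ v x := fun x => le_max_right _ _
  have hwnn : ∀ x, 0 ≤ w x := fun x => le_max_right _ _
  have hvlip : ∀ y z, |v y - v z| ≤ |u' y - u' z| := by
    intro y z
    calc |v y - v z| ≤ |(u' y - b) - (u' z - b)| := abs_max_sub_max_le_abs _ _ _
      _ = |u' y - u' z| := by ring_nf
  have hwlip : ∀ y z, |w y - w z| ≤ |u' y - u' z| := by
    intro y z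
    calc |w y - w z| ≤ |(b - u' y) - (b - u' z)| := abs_max_sub_max_le_abs _ _ _
      _ = |u' y - u' z| := by rw [abs_sub_comm]; ring_nf
  have hv0 : ν {x | 0 < v x} ≤ M / 2 := by
    have : {x | 0 < v x} = {x | b < u' x} := by
      ext x; simp only [hvdef, Set.mem_setOf_eq, lt_max_iff, sub_pos, lt_irrefl, or_false]
    rw [this]; exact hb1
  have hw0 : ν {x | 0 < w x} ≤ M / 2 := by
    have : {x | 0 < w x} = {x | u' x < b} := by
      ext x; simp only [hwdef, Set.mem_setOf_eq, lt_max_iff, sub_pos, lt_irrefl, or_false]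
    rw [this]; exact hb2
  have hsplitpt : ∀ x, ENNReal.ofReal (|u' x - b| ^ q)
      = ENNReal.ofReal (v x ^ q) + ENNReal.ofReal (w x ^ q) := by
    intro x
    rcases le_total b (u' x) with hx | hx
    · have hw' : w x = 0 := by simp only [hwdef]; exact max_eq_right (by linarith)
      have hv' : v x = |u' x - b| := by
        simp only [hvdef]; rw [max_eq_left (by linarith), abs_of_nonneg (by linarith)]
      rw [hv', hw', Real.zero_rpow hq0.ne', ENNReal.ofReal_zero, add_zero]
    · have hv' : v x = 0 := by simp only [hvdef]; exact max_eq_right (by linarith)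
      have hw' : w x = |u' x - b| := by
        simp only [hwdef]; rw [max_eq_left (by linarith), abs_of_nonpos (by linarith), neg_sub]
      rw [hv', hw', Real.zero_rpow hq0.ne', ENNReal.ofReal_zero, zero_add]
  have congr1 : ∫⁻ x in G, ENNReal.ofReal (|u x - b| ^ q) ∂μ
      = ∫⁻ x, ENNReal.ofReal (|u' x - b| ^ q) ∂ν :=
    lintegral_congr_ae (by filter_upwards [hu'ae] with x hx; rw [hx])
  refine le_trans (iInf_le _ b) ?_
  rw [congr1, lintegral_congr hsplitpt]
  rw [lintegral_add_left (f := fun x => ENNReal.ofReal (v x ^ q))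
    (ENNReal.measurable_ofReal.comp (hvmeas.pow measurable_const))]
  calc ∫⁻ x, ENNReal.ofReal (v x ^ q) ∂ν + ∫⁻ x, ENNReal.ofReal (w x ^ q) ∂ν
      ≤ ENNReal.ofReal (32 ^ q * Cp ^ (q / p) * C₁) * (fracEnergy G μ τ δ p u') ^ (q / p)
        + ENNReal.ofReal (32 ^ q * Cp ^ (q / p) * C₁) * (fracEnergy G μ τ δ p u') ^ (q / p) :=
        add_le_add (piece v hvmeas hvnn hvlip hv0) (piece w hwmeas hwnn hwlip hw0)
    _ = ENNReal.ofReal (2 * 32 ^ q * Cp ^ (q / p) * C₁) * (fracEnergy G μ τ δ p u') ^ (q / p) := by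
        have h2 : ENNReal.ofReal (2 * 32 ^ q * Cp ^ (q / p) * C₁)
            = 2 * ENNReal.ofReal (32 ^ q * Cp ^ (q / p) * C₁) := by
          rw [show (2:ℝ) * 32 ^ q * Cp ^ (q / p) * C₁
              = 2 * (32 ^ q * Cp ^ (q / p) * C₁) by ring,
            ENNReal.ofReal_mul (by norm_num : (0:ℝ) ≤ 2), ENNReal.ofReal_ofNat]
        rw [h2, ← two_mul]
        ring
    _ = ENNReal.ofReal (2 * 32 ^ q * Cp ^ (q / p) * C₁) * (fracEnergy G μ τ δ p u) ^ (q / p) := by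
        rw [hE]

end AuxLemmas

/-- Theorem 4.1 (truncation): equivalence of the weak and strong type improved fractional
Poincaré inequalities, with constant `C₂ = C(p,q)·C₁` in the direction (A) ⇒ (B),
and `C₁ = C₂` in the direction (B) ⇒ (A). -/
theorem weak_strong_equivalence (p q : ℝ) (hp : 0 < p) (hpq : p ≤ q) :
    ∃ Cpq : ℝ, 0 < Cpq ∧
      ∀ (n : ℕ) (G : Set (EuclideanSpace ℝ (Fin n))), IsOpen G →
        ∀ (μ : Measure (EuclideanSpace ℝ (Fin n))), μ G < ∞ →
          ∀ (δ : ℝ), δ ∈ Set.Ioo (0 : ℝ) 1 →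
            ∀ (τ : ℝ≥0∞), 0 < τ →
              ((∃ C₁ : ℝ, 0 < C₁ ∧ WeakTypeFracPoincare G μ τ δ p q C₁) ↔
                (∃ C₂ : ℝ, 0 < C₂ ∧ StrongTypeFracPoincare G μ τ δ p q C₂)) ∧
              (∀ C₁ : ℝ, 0 < C₁ → WeakTypeFracPoincare G μ τ δ p q C₁ →
                StrongTypeFracPoincare G μ τ δ p q (Cpq * C₁)) ∧
              (∀ C₂ : ℝ, 0 < C₂ → StrongTypeFracPoincare G μ τ δ p q C₂ →
                WeakTypeFracPoincare G μ τ δ p q C₂) := by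
  have hq0 : 0 < q := lt_of_lt_of_le hp hpq
  have h2p : (1:ℝ) < 2 ^ p := by
    rw [show (1:ℝ) = (2:ℝ) ^ (0:ℝ) by simp]
    exact Real.rpow_lt_rpow_left_iff (by norm_num) |>.2 hp
  have hCp : (0:ℝ) < 2 + (1 - ((2:ℝ) ^ p)⁻¹)⁻¹ := by
    have : (0:ℝ) < (1 - ((2:ℝ) ^ p)⁻¹)⁻¹ := by
      apply inv_pos.2
      have : ((2:ℝ) ^ p)⁻¹ < 1 := inv_lt_one_of_one_lt₀ h2p
      linarith
    linarith
  have hCpq : (0:ℝ) < 2 * 32 ^ q * (2 + (1 - ((2:ℝ) ^ p)⁻¹)⁻¹) ^ (q / p) :=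
    mul_pos (mul_pos two_pos (Real.rpow_pos_of_pos (by norm_num) q))
      (Real.rpow_pos_of_pos hCp _)
  refine ⟨2 * 32 ^ q * (2 + (1 - ((2:ℝ) ^ p)⁻¹)⁻¹) ^ (q / p), hCpq, ?_⟩
  intro n G hG μ hμ δ hδ τ hτ
  refine ⟨⟨?_, ?_⟩, ?_, ?_⟩
  · rintro ⟨C₁, hC₁, hA⟩
    exact ⟨_, mul_pos hCpq hC₁, weak_to_strong' hG hμ hp hpq hA⟩
  · rintro ⟨C₂, hC₂, hB⟩
    exact ⟨C₂, hC₂, strong_to_weak' hG hμ hq0 hB⟩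
  · intro C₁ hC₁ hA
    exact weak_to_strong' hG hμ hp hpq hA
  · intro C₂ hC₂ hB
    exact strong_to_weak' hG hμ hq0 hB
end

section
/- Let 0 < δ < n. Then there exists a constant C = C(n, δ) > 0 such that for every f ∈ L¹(ℝⁿ), sup_{t > 0} |{x ∈ ℝⁿ : |I_δ(f)(x)| > t}| · t^{n/(n−δ)} ≤ C · ‖f‖₁^{n/(n−δ)}, where |·| denotes Lebesgue measure. -/
open MeasureTheory Metric Set ENNReal

/-- The Riesz `δ`-potential `I_δ(f)(x) = ∫_{ℝⁿ} f(y) / |x − y|^{n−δ} dy`. -/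
noncomputable def rieszPotential {n : ℕ} (δ : ℝ) (f : EuclideanSpace ℝ (Fin n) → ℝ)
    (x : EuclideanSpace ℝ (Fin n)) : ℝ :=
  ∫ y, f y / dist x y ^ ((n : ℝ) - δ)


variable {n : ℕ}

lemma scale_lintegral (g : EuclideanSpace ℝ (Fin n) → ℝ≥0∞) (hg : Measurable g)
    {r : ℝ} (hr : 0 < r) :
    ∫⁻ z, g z = ENNReal.ofReal (r ^ n) * ∫⁻ z, g (r • z) := by
  have hmap := Measure.map_addHaar_smul (volume : Measure (EuclideanSpace ℝ (Fin n))) hr.ne'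
  have h1 : ∫⁻ z, g (r • z) = ∫⁻ z, g z ∂(Measure.map (r • ·) volume) :=
    (lintegral_map hg (measurable_const_smul r)).symm
  rw [hmap, lintegral_smul_measure] at h1
  rw [finrank_euclideanSpace, Fintype.card_fin] at h1
  have hrn : (0:ℝ) < r ^ n := pow_pos hr n
  rw [h1, abs_of_nonneg (inv_nonneg.2 hrn.le), ENNReal.ofReal_inv_of_pos hrn, smul_eq_mul, ← mul_assoc,
    ENNReal.mul_inv_cancel (by positivity) ENNReal.ofReal_ne_top, one_mul]

lemma kernel_scale {δ : ℝ} {R : ℝ} (hR : 0 < R) :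
    ∫⁻ z in ball (0 : EuclideanSpace ℝ (Fin n)) R, ENNReal.ofReal (‖z‖ ^ (δ - n)) =
      ENNReal.ofReal (R ^ δ) *
        ∫⁻ z in ball (0 : EuclideanSpace ℝ (Fin n)) 1, ENNReal.ofReal (‖z‖ ^ (δ - n)) := by
  have hmeas : Measurable fun z : EuclideanSpace ℝ (Fin n) =>
      ENNReal.ofReal (‖z‖ ^ (δ - n)) := by measurability
  set g : EuclideanSpace ℝ (Fin n) → ℝ≥0∞ :=
    (ball (0 : EuclideanSpace ℝ (Fin n)) R).indicator
      (fun z => ENNReal.ofReal (‖z‖ ^ (δ - n))) with hg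
  have hgm : Measurable g := hmeas.indicator measurableSet_ball
  have h0 : ∫⁻ z in ball (0 : EuclideanSpace ℝ (Fin n)) R, ENNReal.ofReal (‖z‖ ^ (δ - n))
      = ∫⁻ z, g z := (lintegral_indicator measurableSet_ball _).symm
  have hcomp : ∀ z : EuclideanSpace ℝ (Fin n), g (R • z) =
      (ball (0 : EuclideanSpace ℝ (Fin n)) 1).indicator
        (fun z => ENNReal.ofReal (R ^ (δ - n)) * ENNReal.ofReal (‖z‖ ^ (δ - n))) z := by
    intro z
    have hnorm : ‖R • z‖ = R * ‖z‖ := by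
      rw [norm_smul, Real.norm_eq_abs, abs_of_pos hR]
    have hmem : R • z ∈ ball (0 : EuclideanSpace ℝ (Fin n)) R ↔
        z ∈ ball (0 : EuclideanSpace ℝ (Fin n)) 1 := by
      simp only [mem_ball_zero_iff, hnorm]
      constructor
      · intro h; nlinarith
      · intro h; nlinarith
    by_cases hz : z ∈ ball (0 : EuclideanSpace ℝ (Fin n)) 1
    · rw [hg, indicator_of_mem (hmem.2 hz), indicator_of_mem hz, hnorm,
        Real.mul_rpow hR.le (norm_nonneg z), ENNReal.ofReal_mul (Real.rpow_nonneg hR.le _)]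
    · rw [hg, indicator_of_notMem (fun h => hz (hmem.1 h)), indicator_of_notMem hz]
  rw [h0, scale_lintegral g hgm hR]
  simp_rw [hcomp]
  rw [lintegral_indicator measurableSet_ball, lintegral_const_mul _ hmeas, ← mul_assoc,
    ← ENNReal.ofReal_mul (by positivity)]
  congr 2
  rw [← Real.rpow_natCast R n, ← Real.rpow_add hR]
  ring_nf

lemma kernel_finite {δ : ℝ} (hδ0 : 0 < δ) (hδn : δ < n) :
    ∫⁻ z in ball (0 : EuclideanSpace ℝ (Fin n)) 1, ENNReal.ofReal (‖z‖ ^ (δ - n)) < ∞ := by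
  have hn : 0 < n := by exact_mod_cast hδ0.trans hδn
  haveI : Nonempty (Fin n) := Fin.pos_iff_nonempty.mp hn
  set h : EuclideanSpace ℝ (Fin n) → ℝ≥0∞ := fun z => ENNReal.ofReal (‖z‖ ^ (δ - n)) with hh
  set A : ℕ → Set (EuclideanSpace ℝ (Fin n)) :=
    fun k => ball 0 ((1/2 : ℝ) ^ k) \ ball 0 ((1/2 : ℝ) ^ (k+1)) with hA
  have hcover : ball (0 : EuclideanSpace ℝ (Fin n)) 1 \ {0} ⊆ ⋃ k, A k := by
    intro z hz
    obtain ⟨hz1, hz0⟩ := hz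
    rw [mem_ball_zero_iff] at hz1
    have hzpos : 0 < ‖z‖ := norm_pos_iff.2 (by simpa using hz0)
    obtain ⟨m, hm⟩ := exists_pow_lt_of_lt_one hzpos (by norm_num : (1/2 : ℝ) < 1)
    have hex : ∃ k, (1/2 : ℝ) ^ k ≤ ‖z‖ := ⟨m, hm.le⟩
    have hk0 := Nat.find_spec hex
    have hk0ne : Nat.find hex ≠ 0 := by
      intro h0
      rw [h0, pow_zero] at hk0; linarith
    obtain ⟨k, hk⟩ := Nat.exists_eq_succ_of_ne_zero hk0ne
    have hklt : ¬ ((1/2 : ℝ) ^ k ≤ ‖z‖) := Nat.find_min hex (by omega)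
    rw [hk] at hk0
    refine mem_iUnion.2 ⟨k, ?_, ?_⟩
    · rw [mem_ball_zero_iff]; linarith [not_le.1 hklt]
    · rw [mem_ball_zero_iff]; exact not_lt.2 hk0
  have hterm : ∀ k : ℕ, ∫⁻ z in A k, h z ≤
      ENNReal.ofReal ((1/2 : ℝ) ^ (δ - (n:ℝ)) * ((1/2 : ℝ) ^ δ) ^ (k:ℕ)) *
        volume (ball (0 : EuclideanSpace ℝ (Fin n)) 1) := by
    intro k
    have hb : ∀ z ∈ A k, h z ≤ ENNReal.ofReal (((1/2:ℝ) ^ (k+1)) ^ (δ - n)) := by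
      intro z hz
      apply ENNReal.ofReal_le_ofReal
      apply Real.rpow_le_rpow_of_nonpos (by positivity)
      · exact le_of_not_gt (by simpa [mem_ball_zero_iff] using hz.2)
      · linarith
    calc ∫⁻ z in A k, h z
        ≤ ∫⁻ _ in A k, ENNReal.ofReal (((1/2:ℝ) ^ (k+1)) ^ (δ - n)) := by
          apply setLIntegral_mono (by measurability) hb
      _ = ENNReal.ofReal (((1/2:ℝ) ^ (k+1)) ^ (δ - n)) * volume (A k) := by
          rw [setLIntegral_const]
      _ ≤ ENNReal.ofReal (((1/2:ℝ) ^ (k+1)) ^ (δ - n)) *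
            volume (ball (0 : EuclideanSpace ℝ (Fin n)) ((1/2:ℝ)^k)) := by
          gcongr
          exact diff_subset
      _ = ENNReal.ofReal (((1/2:ℝ) ^ (k+1)) ^ (δ - n)) *
            (ENNReal.ofReal (((1/2:ℝ)^k) ^ n) * volume (ball (0 : EuclideanSpace ℝ (Fin n)) 1)) := by
          rw [Measure.addHaar_ball _ _ (by positivity), finrank_euclideanSpace, Fintype.card_fin]
      _ = ENNReal.ofReal ((1/2 : ℝ) ^ (δ - (n:ℝ)) * ((1/2 : ℝ) ^ δ) ^ (k:ℕ)) *
            volume (ball (0 : EuclideanSpace ℝ (Fin n)) 1) := by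
          rw [← mul_assoc, ← ENNReal.ofReal_mul (by positivity)]
          congr 2
          simp only [← Real.rpow_natCast ((1:ℝ)/2), ← Real.rpow_natCast (((1:ℝ)/2) ^ δ),
            ← Real.rpow_natCast (((1:ℝ)/2) ^ ((k:ℕ):ℝ))]
          rw [← Real.rpow_mul (by norm_num : (0:ℝ) ≤ 1/2), ← Real.rpow_mul (by norm_num : (0:ℝ) ≤ 1/2),
            ← Real.rpow_mul (by norm_num : (0:ℝ) ≤ 1/2), ← Real.rpow_add (by norm_num : (0:ℝ) < 1/2),
            ← Real.rpow_add (by norm_num : (0:ℝ) < 1/2)]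
          congr 1
          push_cast
          ring
  have hsplit : ∫⁻ z in ball (0 : EuclideanSpace ℝ (Fin n)) 1, h z ≤
      ∑' k, ∫⁻ z in A k, h z := by
    calc ∫⁻ z in ball (0 : EuclideanSpace ℝ (Fin n)) 1, h z
        ≤ ∫⁻ z in (ball (0 : EuclideanSpace ℝ (Fin n)) 1 \ {0}) ∪ {0}, h z :=
          lintegral_mono_set (by intro z hz; by_cases h0 : z = (0:EuclideanSpace ℝ (Fin n)) <;>
            simp [h0, hz])
      _ ≤ (∫⁻ z in ball (0 : EuclideanSpace ℝ (Fin n)) 1 \ {0}, h z) + ∫⁻ z in {(0:EuclideanSpace ℝ (Fin n))}, h z :=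
          lintegral_union_le _ _ _
      _ ≤ (∫⁻ z in ⋃ k, A k, h z) + 0 := by
          gcongr
          · rw [setLIntegral_measure_zero _ _ (measure_singleton _)]
      _ ≤ ∑' k, ∫⁻ z in A k, h z := by rw [add_zero]; exact lintegral_iUnion_le _ _
  have hgeom : ∑' k : ℕ, ENNReal.ofReal ((1/2 : ℝ) ^ (δ - (n:ℝ)) * ((1/2 : ℝ) ^ δ) ^ (k:ℕ)) *
      volume (ball (0 : EuclideanSpace ℝ (Fin n)) 1) < ∞ := by
    have hr1 : (1/2 : ℝ) ^ δ < 1 := Real.rpow_lt_one (by norm_num) (by norm_num) hδ0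
    have heq : ∀ k : ℕ, ENNReal.ofReal ((1/2 : ℝ) ^ (δ - (n:ℝ)) * ((1/2 : ℝ) ^ δ) ^ (k:ℕ)) *
        volume (ball (0 : EuclideanSpace ℝ (Fin n)) 1) =
        (ENNReal.ofReal ((1/2 : ℝ) ^ (δ - (n:ℝ))) * volume (ball (0 : EuclideanSpace ℝ (Fin n)) 1)) *
          (ENNReal.ofReal ((1/2 : ℝ) ^ δ)) ^ (k:ℕ) := by
      intro k
      rw [ENNReal.ofReal_mul (by positivity), ENNReal.ofReal_pow (by positivity)]
      ring
    simp_rw [heq]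
    rw [ENNReal.tsum_mul_left]
    apply ENNReal.mul_lt_top
    · exact ENNReal.mul_lt_top ENNReal.ofReal_lt_top measure_ball_lt_top
    · rw [ENNReal.tsum_geometric]
      apply ENNReal.inv_lt_top.2
      rw [tsub_pos_iff_lt]
      exact ENNReal.ofReal_lt_one.2 hr1
  exact lt_of_le_of_lt (hsplit.trans (ENNReal.tsum_le_tsum hterm)) hgeom

/-- Theorem 2.4 (weak type estimate for the Riesz potential): for `0 < δ < n` there is
`C = C(n, δ) > 0` with
`sup_{t>0} |{x : |I_δ f (x)| > t}| · t^{n/(n−δ)} ≤ C ‖f‖₁^{n/(n−δ)}` for all `f ∈ L¹(ℝⁿ)`. -/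
theorem riesz_potential_weak_type {n : ℕ} {δ : ℝ} (hδ0 : 0 < δ) (hδn : δ < n) :
    ∃ C : ℝ, 0 < C ∧ ∀ f : EuclideanSpace ℝ (Fin n) → ℝ, Integrable f volume →
      ∀ t : ℝ, 0 < t →
        volume {x : EuclideanSpace ℝ (Fin n) | t < |rieszPotential δ f x|} *
            ENNReal.ofReal (t ^ ((n : ℝ) / ((n : ℝ) - δ))) ≤
          ENNReal.ofReal C *
            (ENNReal.ofReal (∫ y, |f y|)) ^ ((n : ℝ) / ((n : ℝ) - δ)) := by
  have hν : (0:ℝ) < (n:ℝ) - δ := by linarith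
  have hp1 : (n:ℝ) / ((n:ℝ) - δ) = 1 + δ / ((n:ℝ) - δ) := by
    field_simp
    ring
  have hK1 : ∫⁻ z in ball (0 : EuclideanSpace ℝ (Fin n)) 1,
      ENNReal.ofReal (‖z‖ ^ (δ - n)) < ∞ := kernel_finite hδ0 hδn
  set c1 : ℝ := (∫⁻ z in ball (0 : EuclideanSpace ℝ (Fin n)) 1,
      ENNReal.ofReal (‖z‖ ^ (δ - n))).toReal with hc1def
  have hc1 : (0:ℝ) ≤ c1 := ENNReal.toReal_nonneg
  have hK1' : ∫⁻ z in ball (0 : EuclideanSpace ℝ (Fin n)) 1,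
      ENNReal.ofReal (‖z‖ ^ (δ - n)) = ENNReal.ofReal c1 := by
    rw [hc1def, ENNReal.ofReal_toReal hK1.ne]
  refine ⟨2 * 2 ^ (δ / ((n:ℝ) - δ)) * c1 + 1, by positivity, ?_⟩
  intro f hf t ht
  -- replace f by a strongly measurable representative g
  set g := hf.1.mk f with hgdef
  have hgm : StronglyMeasurable g := hf.1.stronglyMeasurable_mk
  have hfg : f =ᵐ[volume] g := hf.1.ae_eq_mk
  have hg : Integrable g volume := hf.congr hfg
  have hriesz : ∀ x, rieszPotential δ f x = rieszPotential δ g x := fun x =>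
    integral_congr_ae (hfg.mono fun y hy => by simp [hy])
  have hLeq : ∫ y, |f y| = ∫ y, |g y| := integral_congr_ae (hfg.mono fun y hy => by simp [hy])
  have hset : {x : EuclideanSpace ℝ (Fin n) | t < |rieszPotential δ f x|}
      = {x : EuclideanSpace ℝ (Fin n) | t < |rieszPotential δ g x|} := by
    ext x; simp [hriesz x]
  rw [hLeq, hset]
  set L := ∫ y, |g y| with hLdef
  have hL0 : 0 ≤ L := integral_nonneg fun y => abs_nonneg _
  rcases eq_or_lt_of_le hL0 with hL | hL
  · -- trivial case : ‖g‖₁ = 0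
    have hg0 : g =ᵐ[volume] 0 := by
      have habs : (fun y => |g y|) =ᵐ[volume] 0 :=
        (integral_eq_zero_iff_of_nonneg (fun y => abs_nonneg (g y)) hg.abs).mp hL.symm
      exact habs.mono fun y hy => by simpa using hy
    have hz : ∀ x, rieszPotential δ g x = 0 := by
      intro x
      have h0 : (fun y => g y / dist x y ^ ((n:ℝ) - δ)) =ᵐ[volume] 0 :=
        hg0.mono fun y hy => by simp [Pi.zero_apply] at hy ⊢; simp [hy]
      rw [rieszPotential, integral_congr_ae h0]; simp
    have hempty : {x : EuclideanSpace ℝ (Fin n) | t < |rieszPotential δ g x|} = ∅ := by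
      ext x; simp only [mem_setOf_eq, mem_empty_iff_false, iff_false, not_lt, hz x]
      simpa using ht.le
    rw [hempty]
    simp
  -- main case
  set R := (2 * L / t) ^ (1 / ((n:ℝ) - δ)) with hRdef
  have h2L : 0 < 2 * L / t := by positivity
  have hR : 0 < R := Real.rpow_pos_of_pos h2L _
  have hRν : R ^ (δ - (n:ℝ)) = t / (2 * L) := by
    rw [hRdef, ← Real.rpow_mul h2L.le]
    have h1 : 1 / ((n:ℝ) - δ) * (δ - (n:ℝ)) = -1 := by field_simp; ring
    rw [h1, Real.rpow_neg_one, inv_div]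

  -- the kernel cut off at radius `R`
  set W : EuclideanSpace ℝ (Fin n) → ℝ≥0∞ :=
    (ball (0 : EuclideanSpace ℝ (Fin n)) R).indicator
      (fun z => ENNReal.ofReal (‖z‖ ^ (δ - (n:ℝ)))) with hWdef
  have hkm : Measurable fun z : EuclideanSpace ℝ (Fin n) => ENNReal.ofReal (‖z‖ ^ (δ - (n:ℝ))) :=
    (measurable_norm.pow_const _).ennreal_ofReal
  have hWm : Measurable W := hkm.indicator measurableSet_ball
  set G : EuclideanSpace ℝ (Fin n) → ℝ≥0∞ :=
    fun x => ∫⁻ y, ENNReal.ofReal |g y| * W (x - y) with hGdef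
  have hjoint : Measurable fun q : EuclideanSpace ℝ (Fin n) × EuclideanSpace ℝ (Fin n) =>
      ENNReal.ofReal |g q.2| * W (q.1 - q.2) :=
    ((hgm.measurable.comp measurable_snd).abs.ennreal_ofReal).mul
      (hWm.comp (measurable_fst.sub measurable_snd))
  have hGm : Measurable G := hjoint.lintegral_prod_right'
  have habs : ∀ x y : EuclideanSpace ℝ (Fin n),
      ‖g y / dist x y ^ ((n:ℝ) - δ)‖ = |g y| * dist x y ^ (δ - (n:ℝ)) := by
    intro x y
    rw [Real.norm_eq_abs, abs_div, abs_of_nonneg (Real.rpow_nonneg dist_nonneg _),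
      div_eq_mul_inv, ← Real.rpow_neg dist_nonneg, neg_sub]
  have habs' : ∀ x y : EuclideanSpace ℝ (Fin n),
      |g y / dist x y ^ ((n:ℝ) - δ)| = |g y| * dist x y ^ (δ - (n:ℝ)) := by
    intro x y
    rw [← Real.norm_eq_abs (g y / dist x y ^ ((n:ℝ) - δ))]
    exact habs x y
  have hkey : ∀ x, G x =
      ∫⁻ y in ball x R, ENNReal.ofReal ‖g y / dist x y ^ ((n:ℝ) - δ)‖ := by
    intro x
    have hpt : ∀ y, ENNReal.ofReal |g y| * W (x - y) =
        (ball x R).indicator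
          (fun y => ENNReal.ofReal ‖g y / dist x y ^ ((n:ℝ) - δ)‖) y := by
      intro y
      have hdist : ‖x - y‖ = dist x y := (dist_eq_norm x y).symm
      by_cases hy : y ∈ ball x R
      · have hxy : x - y ∈ ball (0 : EuclideanSpace ℝ (Fin n)) R := by
          rw [mem_ball_zero_iff, hdist]
          rw [mem_ball, dist_comm] at hy
          exact hy
        rw [hWdef, indicator_of_mem hxy, indicator_of_mem hy, habs x y, hdist,
          ← ENNReal.ofReal_mul (abs_nonneg _)]
      · have hxy : x - y ∉ ball (0 : EuclideanSpace ℝ (Fin n)) R := by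
          rw [mem_ball_zero_iff, hdist]
          rw [mem_ball, dist_comm] at hy
          exact hy
        rw [hWdef, indicator_of_notMem hxy, indicator_of_notMem hy, mul_zero]
    rw [hGdef]
    simp only [hpt]
    rw [lintegral_indicator measurableSet_ball]
  -- the superlevel set is contained in a superlevel set of `G`
  have hsub : {x : EuclideanSpace ℝ (Fin n) | t < |rieszPotential δ g x|} ⊆
      {x : EuclideanSpace ℝ (Fin n) | ENNReal.ofReal (t/2) ≤ G x} := by
    intro x hx
    simp only [mem_setOf_eq] at hx ⊢
    by_cases hInt : Integrable (fun y => g y / dist x y ^ ((n:ℝ) - δ)) volume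
    swap
    · exfalso
      rw [rieszPotential, integral_undef hInt] at hx
      simp at hx
      linarith
    have hsplitInt : rieszPotential δ g x =
        (∫ y in ball x R, g y / dist x y ^ ((n:ℝ) - δ)) +
          ∫ y in (ball x R)ᶜ, g y / dist x y ^ ((n:ℝ) - δ) := by
      rw [rieszPotential]
      exact (integral_add_compl measurableSet_ball hInt).symm
    have hfar : |∫ y in (ball x R)ᶜ, g y / dist x y ^ ((n:ℝ) - δ)| ≤ t / 2 := by
      have hbound : ∀ y ∈ (ball x R)ᶜ,
          |g y / dist x y ^ ((n:ℝ) - δ)| ≤ |g y| * (t / (2*L)) := by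
        intro y hy
        have hdy : R ≤ dist x y := by
          rw [mem_compl_iff, mem_ball, dist_comm] at hy
          exact le_of_not_gt hy
        have h1 : dist x y ^ (δ - (n:ℝ)) ≤ R ^ (δ - (n:ℝ)) :=
          Real.rpow_le_rpow_of_nonpos hR hdy (by linarith)
        rw [habs' x y, ← hRν]
        exact mul_le_mul_of_nonneg_left h1 (abs_nonneg _)
      calc |∫ y in (ball x R)ᶜ, g y / dist x y ^ ((n:ℝ) - δ)|
          ≤ ∫ y in (ball x R)ᶜ, |g y / dist x y ^ ((n:ℝ) - δ)| := by
            simpa only [Real.norm_eq_abs] using norm_integral_le_integral_norm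
              (μ := volume.restrict (ball x R)ᶜ) (fun y => g y / dist x y ^ ((n:ℝ) - δ))
        _ ≤ ∫ y in (ball x R)ᶜ, |g y| * (t / (2*L)) :=
            setIntegral_mono_on hInt.abs.integrableOn
              (hg.abs.mul_const _).integrableOn measurableSet_ball.compl hbound
        _ ≤ ∫ y, |g y| * (t / (2*L)) :=
            setIntegral_le_integral (hg.abs.mul_const _)
              (Filter.Eventually.of_forall fun y => by positivity)
        _ = L * (t / (2*L)) := by rw [integral_mul_const]
        _ = t / 2 := by field_simp
    have hnear : t/2 < |∫ y in ball x R, g y / dist x y ^ ((n:ℝ) - δ)| := by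
      have htri := abs_add_le (∫ y in ball x R, g y / dist x y ^ ((n:ℝ) - δ))
        (∫ y in (ball x R)ᶜ, g y / dist x y ^ ((n:ℝ) - δ))
      rw [hsplitInt] at hx
      linarith
    have hle : |∫ y in ball x R, g y / dist x y ^ ((n:ℝ) - δ)| ≤ (G x).toReal := by
      rw [hkey x]
      exact (Real.norm_eq_abs _) ▸ norm_integral_le_lintegral_norm _
    by_cases hGtop : G x = ∞
    · simp [hGtop]
    · calc ENNReal.ofReal (t/2) ≤ ENNReal.ofReal ((G x).toReal) :=
            ENNReal.ofReal_le_ofReal (by linarith)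
        _ = G x := ENNReal.ofReal_toReal hGtop
  -- Tonelli
  have hTon : ∫⁻ x, G x =
      ENNReal.ofReal L * (ENNReal.ofReal (R ^ δ) * ENNReal.ofReal c1) := by
    have h1 : ∫⁻ x, G x = ∫⁻ y, ∫⁻ x, ENNReal.ofReal |g y| * W (x - y) :=
      lintegral_lintegral_swap hjoint.aemeasurable
    have h2 : ∀ y, ∫⁻ x, ENNReal.ofReal |g y| * W (x - y)
        = ENNReal.ofReal |g y| * ∫⁻ z, W z := by
      intro y
      have hm1 : Measurable fun x : EuclideanSpace ℝ (Fin n) => W (x - y) :=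
        hWm.comp (measurable_sub_const y)
      rw [lintegral_const_mul _ hm1,
        (measurePreserving_sub_right volume y).lintegral_comp hWm]
    have h3 : ∫⁻ z, W z = ENNReal.ofReal (R ^ δ) * ENNReal.ofReal c1 := by
      rw [hWdef, lintegral_indicator measurableSet_ball, kernel_scale hR, hK1']
    have h4 : ∫⁻ y, ENNReal.ofReal |g y| = ENNReal.ofReal L := by
      rw [hLdef]
      exact (ofReal_integral_eq_lintegral_ofReal hg.abs
        (Filter.Eventually.of_forall fun y => abs_nonneg _)).symm
    rw [h1]
    simp only [h2]
    rw [lintegral_mul_const _ (hgm.measurable.abs.ennreal_ofReal), h4, h3]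
  -- Chebyshev
  have ht2 : ENNReal.ofReal (t/2) ≠ 0 := (ENNReal.ofReal_pos.2 (by positivity)).ne'
  have hvolT : volume {x : EuclideanSpace ℝ (Fin n) | ENNReal.ofReal (t/2) ≤ G x} ≤
      ENNReal.ofReal (2/t) *
        (ENNReal.ofReal L * (ENNReal.ofReal (R ^ δ) * ENNReal.ofReal c1)) := by
    have hcheb := mul_meas_ge_le_lintegral₀ (μ := (volume : Measure (EuclideanSpace ℝ (Fin n)))) hGm.aemeasurable (ENNReal.ofReal (t/2))
    rw [hTon] at hcheb
    have hinv : (ENNReal.ofReal (t/2))⁻¹ = ENNReal.ofReal (2/t) := by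
      rw [← ENNReal.ofReal_inv_of_pos (by positivity), inv_div]
    calc volume {x : EuclideanSpace ℝ (Fin n) | ENNReal.ofReal (t/2) ≤ G x}
        = (ENNReal.ofReal (t/2))⁻¹ * (ENNReal.ofReal (t/2) *
            volume {x : EuclideanSpace ℝ (Fin n) | ENNReal.ofReal (t/2) ≤ G x}) := by
          rw [← mul_assoc, ENNReal.inv_mul_cancel ht2 ENNReal.ofReal_ne_top, one_mul]
      _ ≤ (ENNReal.ofReal (t/2))⁻¹ *
            (ENNReal.ofReal L * (ENNReal.ofReal (R ^ δ) * ENNReal.ofReal c1)) :=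
          mul_le_mul_right hcheb _
      _ = ENNReal.ofReal (2/t) *
            (ENNReal.ofReal L * (ENNReal.ofReal (R ^ δ) * ENNReal.ofReal c1)) := by
          rw [hinv]
  -- the real-number computation
  have hreal : 2/t * (L * (R ^ δ * c1)) * t ^ ((n:ℝ)/((n:ℝ)-δ)) =
      2 * 2 ^ (δ/((n:ℝ)-δ)) * c1 * L ^ ((n:ℝ)/((n:ℝ)-δ)) := by
    have hq : t ^ ((n:ℝ)/((n:ℝ)-δ)) = t * t ^ (δ/((n:ℝ)-δ)) := by
      rw [hp1, Real.rpow_add ht, Real.rpow_one]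
    have hLp : L ^ ((n:ℝ)/((n:ℝ)-δ)) = L * L ^ (δ/((n:ℝ)-δ)) := by
      rw [hp1, Real.rpow_add hL, Real.rpow_one]
    have hRδ : R ^ δ = 2 ^ (δ/((n:ℝ)-δ)) * L ^ (δ/((n:ℝ)-δ)) / t ^ (δ/((n:ℝ)-δ)) := by
      rw [hRdef, ← Real.rpow_mul h2L.le]
      have h5 : 1/((n:ℝ)-δ) * δ = δ/((n:ℝ)-δ) := by ring
      rw [h5, Real.div_rpow (by positivity) ht.le, Real.mul_rpow (by norm_num) hL0]
    rw [hRδ, hq, hLp]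
    have h6 : t ^ (δ/((n:ℝ)-δ)) ≠ 0 := (Real.rpow_pos_of_pos ht _).ne'
    field_simp
  -- put everything together
  calc volume {x : EuclideanSpace ℝ (Fin n) | t < |rieszPotential δ g x|} *
        ENNReal.ofReal (t ^ ((n:ℝ)/((n:ℝ)-δ)))
      ≤ volume {x : EuclideanSpace ℝ (Fin n) | ENNReal.ofReal (t/2) ≤ G x} *
          ENNReal.ofReal (t ^ ((n:ℝ)/((n:ℝ)-δ))) :=
        mul_le_mul_left (measure_mono hsub) _
    _ ≤ (ENNReal.ofReal (2/t) *
          (ENNReal.ofReal L * (ENNReal.ofReal (R ^ δ) * ENNReal.ofReal c1))) *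
          ENNReal.ofReal (t ^ ((n:ℝ)/((n:ℝ)-δ))) := mul_le_mul_left hvolT _
    _ = ENNReal.ofReal (2/t * (L * (R ^ δ * c1)) * t ^ ((n:ℝ)/((n:ℝ)-δ))) := by
        rw [← ENNReal.ofReal_mul (by positivity), ← ENNReal.ofReal_mul (by positivity),
          ← ENNReal.ofReal_mul (by positivity), ← ENNReal.ofReal_mul (by positivity)]
    _ = ENNReal.ofReal (2 * 2 ^ (δ/((n:ℝ)-δ)) * c1 * L ^ ((n:ℝ)/((n:ℝ)-δ))) := by
        rw [hreal]
    _ ≤ ENNReal.ofReal ((2 * 2 ^ (δ/((n:ℝ)-δ)) * c1 + 1) * L ^ ((n:ℝ)/((n:ℝ)-δ))) := by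
        apply ENNReal.ofReal_le_ofReal
        have : (0:ℝ) ≤ L ^ ((n:ℝ)/((n:ℝ)-δ)) := Real.rpow_nonneg hL0 _
        nlinarith
    _ = ENNReal.ofReal (2 * 2 ^ (δ/((n:ℝ)-δ)) * c1 + 1) *
          ENNReal.ofReal (L ^ ((n:ℝ)/((n:ℝ)-δ))) := by
        rw [← ENNReal.ofReal_mul (by positivity)]
    _ = ENNReal.ofReal (2 * 2 ^ (δ/((n:ℝ)-δ)) * c1 + 1) *
          (ENNReal.ofReal L) ^ ((n:ℝ)/((n:ℝ)-δ)) := by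
        rw [← ENNReal.ofReal_rpow_of_pos hL]
end

section
/- Let 1 ≤ p < ∞ and 0 < δ < 1 with pδ ≥ 1. Let G = (−1,1)² \ ((0,1) × {0}) ⊂ ℝ², and define u : G → [0,1] by u(x) = x₁ for x ∈ (0,1)² and u(x) = 0 otherwise. Then ∫_G ∫_G |u(x) − u(y)|^p / |x − y|^{2+δp} dy dx = ∞. -/
open MeasureTheory Metric Set ENNReal

/-- The slit square `G = (−1,1)² \ ((0,1) × {0}) ⊆ ℝ²`. -/
def slitSquare : Set (EuclideanSpace ℝ (Fin 2)) :=
  {x | x 0 ∈ Set.Ioo (-1 : ℝ) 1 ∧ x 1 ∈ Set.Ioo (-1 : ℝ) 1} \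
    {x | x 0 ∈ Set.Ioo (0 : ℝ) 1 ∧ x 1 = 0}

/-- The function `u(x) = x₁` on `(0,1)²` and `u = 0` otherwise. -/
noncomputable def slitFunction (x : EuclideanSpace ℝ (Fin 2)) : ℝ :=
  if x 0 ∈ Set.Ioo (0 : ℝ) 1 ∧ x 1 ∈ Set.Ioo (0 : ℝ) 1 then x 0 else 0

/-- The coordinate map `EuclideanSpace ℝ (Fin 2) → ℝ × ℝ`. -/
noncomputable def slitCoord : EuclideanSpace ℝ (Fin 2) → ℝ × ℝ := fun x => (x 0, x 1)

lemma slitCoord_measurePreserving : MeasurePreserving slitCoord volume volume :=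
  (volume_preserving_piFinTwo (fun _ => ℝ)).comp
    (EuclideanSpace.volume_preserving_symm_measurableEquiv_toLp (Fin 2))

lemma slitCoord_embedding : MeasurableEmbedding slitCoord :=
  (MeasurableEquiv.piFinTwo fun _ : Fin 2 => ℝ).measurableEmbedding.comp
    (MeasurableEquiv.toLp 2 (Fin 2 → ℝ)).symm.measurableEmbedding

lemma slit_lintegral_rpow_top {s : ℝ} (hs : s ≤ -1) :
    ∫⁻ t in Ioo (0:ℝ) (1/4), ENNReal.ofReal (t ^ s) = ∞ := by
  by_contra h
  have hint : IntegrableOn (fun t : ℝ => t ^ s) (Ioo 0 (1/4)) := by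
    refine ⟨(measurable_id.pow_const s).aestronglyMeasurable, ?_⟩
    rw [hasFiniteIntegral_iff_ofReal ?_]
    · exact lt_top_iff_ne_top.2 h
    · filter_upwards [ae_restrict_mem measurableSet_Ioo] with t ht
      exact Real.rpow_nonneg ht.1.le s
  rw [intervalIntegral.integrableOn_Ioo_rpow_iff (by norm_num)] at hint
  linarith

/-- On the slit square, the full fractional seminorm of `slitFunction` is infinite
whenever `1 ≤ p < ∞`, `0 < δ < 1` and `pδ ≥ 1`. -/
theorem slitSquare_full_seminorm_infinite
    {p δ : ℝ} (hp : 1 ≤ p) (hδ : δ ∈ Set.Ioo (0 : ℝ) 1) (hpδ : 1 ≤ p * δ) :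
    (∫⁻ x in slitSquare, ∫⁻ y in slitSquare,
        ENNReal.ofReal
          (|slitFunction x - slitFunction y| ^ p / dist x y ^ ((2 : ℝ) + δ * p))) = ∞ := by
  obtain ⟨hδ0, hδ1⟩ := hδ
  have hp0 : (0:ℝ) < p := lt_of_lt_of_le zero_lt_one hp
  have hδp1 : 1 ≤ δ * p := by nlinarith
  have he0 : (0:ℝ) ≤ 2 + δ * p := by nlinarith
  have hFmp := slitCoord_measurePreserving
  -- volume of coordinate rectangles
  have hvol : ∀ a b c d : ℝ,
      volume {y : EuclideanSpace ℝ (Fin 2) | y 0 ∈ Ioo a b ∧ y 1 ∈ Ioo c d}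
        = ENNReal.ofReal (b - a) * ENNReal.ofReal (d - c) := by
    intro a b c d
    have h1 : {y : EuclideanSpace ℝ (Fin 2) | y 0 ∈ Ioo a b ∧ y 1 ∈ Ioo c d}
        = slitCoord ⁻¹' (Ioo a b ×ˢ Ioo c d) := rfl
    rw [h1, hFmp.measure_preimage (measurableSet_Ioo.prod measurableSet_Ioo).nullMeasurableSet,
      Measure.volume_eq_prod, Measure.prod_prod, Real.volume_Ioo, Real.volume_Ioo]
  set A : Set (EuclideanSpace ℝ (Fin 2)) :=
    {x | x 0 ∈ Ioo (1/2:ℝ) (3/4) ∧ x 1 ∈ Ioo (0:ℝ) (1/4)} with hAdef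
  have hAmeas : MeasurableSet A :=
    slitCoord_embedding.measurable (measurableSet_Ioo.prod measurableSet_Ioo)
  have hAsub : A ⊆ slitSquare := by
    rintro x ⟨⟨h1, h2⟩, h3, h4⟩
    exact ⟨⟨⟨by linarith, by linarith⟩, ⟨by linarith, by linarith⟩⟩,
      fun h => absurd h.2 (ne_of_gt h3)⟩
  have hCpos : (0:ℝ) < (1/2:ℝ) ^ p / 3 ^ ((2:ℝ) + δ * p) := by positivity
  -- key pointwise lower bound for the inner integral
  have key : ∀ x ∈ A,
      ENNReal.ofReal ((1/2:ℝ) ^ p / 3 ^ ((2:ℝ) + δ * p)) *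
        ENNReal.ofReal ((x 1) ^ (-(δ * p)))
      ≤ ∫⁻ y in slitSquare,
          ENNReal.ofReal
            (|slitFunction x - slitFunction y| ^ p / dist x y ^ ((2 : ℝ) + δ * p)) := by
    rintro x ⟨⟨hx01, hx02⟩, hx11, hx12⟩
    set R : Set (EuclideanSpace ℝ (Fin 2)) :=
      {y | y 0 ∈ Ioo (x 0) (x 0 + x 1) ∧ y 1 ∈ Ioo (-(x 1)) 0} with hRdef
    have hRmeas : MeasurableSet R :=
      slitCoord_embedding.measurable (measurableSet_Ioo.prod measurableSet_Ioo)
    have hRsub : R ⊆ slitSquare := by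
      rintro y ⟨⟨hy01, hy02⟩, hy11, hy12⟩
      exact ⟨⟨⟨by linarith, by linarith⟩, ⟨by linarith, by linarith⟩⟩,
        fun h => absurd h.2 (ne_of_lt hy12)⟩
    have hreal : ((1/2:ℝ) ^ p / 3 ^ ((2:ℝ) + δ * p)) * (x 1) ^ (-(δ * p))
        = ((1/2:ℝ) ^ p / (3 * x 1) ^ ((2:ℝ) + δ * p)) * (x 1 * x 1) := by
      have h3x : (3 * x 1) ^ ((2:ℝ) + δ * p)
          = 3 ^ ((2:ℝ) + δ * p) * (x 1) ^ ((2:ℝ) + δ * p) :=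
        Real.mul_rpow (by norm_num) hx11.le
      have hsq : (x 1) ^ (2:ℝ) = x 1 * x 1 := by
        rw [show (2:ℝ) = ((2:ℕ):ℝ) by norm_num, Real.rpow_natCast]; ring
      have hdiff : (x 1) ^ (-(δ * p)) = (x 1) ^ (2:ℝ) / (x 1) ^ ((2:ℝ) + δ * p) := by
        rw [← Real.rpow_sub hx11]; congr 1; ring
      rw [hdiff, ← hsq, h3x]; ring
    calc ENNReal.ofReal ((1/2:ℝ) ^ p / 3 ^ ((2:ℝ) + δ * p)) *
            ENNReal.ofReal ((x 1) ^ (-(δ * p)))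
        = ENNReal.ofReal ((1/2:ℝ) ^ p / (3 * x 1) ^ ((2:ℝ) + δ * p)) *
            (ENNReal.ofReal (x 1) * ENNReal.ofReal (x 1)) := by
          rw [← ENNReal.ofReal_mul hCpos.le, hreal,
            ENNReal.ofReal_mul (by positivity), ENNReal.ofReal_mul hx11.le]
      _ = ∫⁻ _ in R, ENNReal.ofReal ((1/2:ℝ) ^ p / (3 * x 1) ^ ((2:ℝ) + δ * p)) := by
          rw [setLIntegral_const, hRdef, hvol, show x 0 + x 1 - x 0 = x 1 by ring,
            show (0:ℝ) - -(x 1) = x 1 by ring]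
      _ ≤ ∫⁻ y in R,
            ENNReal.ofReal
              (|slitFunction x - slitFunction y| ^ p / dist x y ^ ((2 : ℝ) + δ * p)) := by
          refine setLIntegral_mono' hRmeas ?_
          rintro y ⟨⟨hy01, hy02⟩, hy11, hy12⟩
          have hux : slitFunction x = x 0 :=
            if_pos ⟨⟨by linarith, by linarith⟩, ⟨hx11, by linarith⟩⟩
          have huy : slitFunction y = 0 := by
            apply if_neg; rintro ⟨-, h1, -⟩; linarith
          have hxy : x ≠ y := by
            intro h; rw [h] at hx11; linarith
          have hd3 : dist x y ≤ 3 * x 1 := by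
            have h0 : |x 0 - y 0| ≤ x 1 := abs_le.2 ⟨by linarith, by linarith⟩
            have h1 : |x 1 - y 1| ≤ 2 * x 1 := abs_le.2 ⟨by linarith, by linarith⟩
            have hsum : (∑ i, dist (x i) (y i) ^ 2) ≤ (3 * x 1) ^ 2 := by
              rw [Fin.sum_univ_two, Real.dist_eq, Real.dist_eq]
              nlinarith [abs_nonneg (x 0 - y 0), abs_nonneg (x 1 - y 1)]
            calc dist x y = √(∑ i, dist (x i) (y i) ^ 2) := EuclideanSpace.dist_eq x y
              _ ≤ √((3 * x 1) ^ 2) := Real.sqrt_le_sqrt hsum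
              _ = 3 * x 1 := Real.sqrt_sq (by linarith)
          apply ENNReal.ofReal_le_ofReal
          rw [hux, huy, sub_zero, abs_of_pos (by linarith : (0:ℝ) < x 0)]
          exact div_le_div₀ (Real.rpow_nonneg (by linarith) p)
            (Real.rpow_le_rpow (by norm_num) (by linarith) hp0.le)
            (Real.rpow_pos_of_pos (dist_pos.2 hxy) _)
            (Real.rpow_le_rpow dist_nonneg hd3 he0)
      _ ≤ ∫⁻ y in slitSquare,
            ENNReal.ofReal
              (|slitFunction x - slitFunction y| ^ p / dist x y ^ ((2 : ℝ) + δ * p)) :=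
          lintegral_mono_set hRsub
  -- divergence of the outer integral
  have hdiv : ∫⁻ x in A, ENNReal.ofReal ((x 1) ^ (-(δ * p))) = ∞ := by
    have h1 := hFmp.setLIntegral_comp_preimage_emb slitCoord_embedding
      (fun z : ℝ × ℝ => ENNReal.ofReal (z.2 ^ (-(δ * p))))
      ((Ioo (1/2:ℝ) (3/4)) ×ˢ (Ioo (0:ℝ) (1/4)))
    have h2 : ∫⁻ z in (Ioo (1/2:ℝ) (3/4)) ×ˢ (Ioo (0:ℝ) (1/4)),
        ENNReal.ofReal (z.2 ^ (-(δ * p))) = ∞ := by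
      rw [Measure.volume_eq_prod, ← Measure.prod_restrict,
        lintegral_prod _ ((measurable_snd.pow_const _).ennreal_ofReal.aemeasurable)]
      show (∫⁻ _ in Ioo (1/2:ℝ) (3/4),
          ∫⁻ t in Ioo (0:ℝ) (1/4), ENNReal.ofReal (t ^ (-(δ * p)))) = ∞
      rw [setLIntegral_const, slit_lintegral_rpow_top (by linarith), Real.volume_Ioo]
      refine ENNReal.top_mul ?_
      simp only [ne_eq, ENNReal.ofReal_eq_zero, not_le]
      norm_num
    exact h1.trans h2
  rw [eq_top_iff]
  calc (⊤:ℝ≥0∞)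
      = ENNReal.ofReal ((1/2:ℝ) ^ p / 3 ^ ((2:ℝ) + δ * p)) *
          ∫⁻ x in A, ENNReal.ofReal ((x 1) ^ (-(δ * p))) := by
        rw [hdiv, ENNReal.mul_top (ENNReal.ofReal_pos.2 hCpos).ne']
    _ = ∫⁻ x in A, ENNReal.ofReal ((1/2:ℝ) ^ p / 3 ^ ((2:ℝ) + δ * p)) *
          ENNReal.ofReal ((x 1) ^ (-(δ * p))) :=
        (lintegral_const_mul' _ _ ENNReal.ofReal_ne_top).symm
    _ ≤ ∫⁻ x in A, ∫⁻ y in slitSquare,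
          ENNReal.ofReal
            (|slitFunction x - slitFunction y| ^ p / dist x y ^ ((2 : ℝ) + δ * p)) :=
        setLIntegral_mono' hAmeas key
    _ ≤ ∫⁻ x in slitSquare, ∫⁻ y in slitSquare,
          ENNReal.ofReal
            (|slitFunction x - slitFunction y| ^ p / dist x y ^ ((2 : ℝ) + δ * p)) :=
        lintegral_mono_set hAsub
end

section
/- Let G = (−1,1)² \ ((0,1) × {0}) ⊂ ℝ², and define u : G → [0,1] by u(x) = x₁ for x ∈ (0,1)² and u(x) = 0 otherwise. Then for every x ∈ G and every y ∈ G with |x − y| < dist(x, ∂G), one has |u(x) − u(y)| ≤ |x − y|; consequently, for every 1 ≤ p < ∞ and 0 < δ < 1, ∫_G ∫_{B(x, dist(x,∂G))} |u(x) − u(y)|^p / |x − y|^{2+δp} dy dx < ∞. -/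
open MeasureTheory Metric Set ENNReal

/-! ### Auxiliary geometric lemmas -/

noncomputable def slitPt (a b : ℝ) : EuclideanSpace ℝ (Fin 2) := WithLp.toLp 2 ![a, b]

lemma slit_dist_eq2 (x y : EuclideanSpace ℝ (Fin 2)) :
    dist x y = Real.sqrt ((x 0 - y 0)^2 + (x 1 - y 1)^2) := by
  rw [EuclideanSpace.dist_eq, Fin.sum_univ_two]
  simp [Real.dist_eq, sq_abs]

lemma slit_abs_coord_le_dist (x y : EuclideanSpace ℝ (Fin 2)) (i : Fin 2) :
    |x i - y i| ≤ dist x y := by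
  rw [EuclideanSpace.dist_eq]
  rw [← Real.sqrt_sq_eq_abs]
  apply Real.sqrt_le_sqrt
  calc (x i - y i) ^ 2 = dist (x i) (y i) ^ 2 := by rw [Real.dist_eq, sq_abs]
    _ ≤ ∑ j : Fin 2, dist (x j) (y j) ^ 2 :=
      Finset.single_le_sum (f := fun j => dist (x j) (y j) ^ 2) (fun j _ => sq_nonneg _)
        (Finset.mem_univ i)

/-- the open unit square is inside the slit square -/
lemma slit_sq_subset : {x : EuclideanSpace ℝ (Fin 2) |
    x 0 ∈ Set.Ioo (0 : ℝ) 1 ∧ x 1 ∈ Set.Ioo (0 : ℝ) 1} ⊆ slitSquare := by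
  rintro x ⟨⟨h1, h2⟩, ⟨h3, h4⟩⟩
  exact ⟨⟨⟨by linarith, h2⟩, ⟨by linarith, h4⟩⟩, fun h => by have := h.2; linarith⟩

lemma slit_mem_frontier_of (z : EuclideanSpace ℝ (Fin 2)) (h0 : z 0 ∈ Set.Icc (0:ℝ) 1)
    (h1 : z 1 ∈ Set.Icc (0:ℝ) 1) (hz : z ∉ slitSquare) : z ∈ frontier slitSquare := by
  constructor
  · -- z ∈ closure slitSquare
    rw [Metric.mem_closure_iff]
    intro ε hε
    set e : ℝ := min (ε/4) (1/4) with he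
    have he0 : 0 < e := lt_min (by linarith) (by norm_num)
    have he4 : e ≤ ε/4 := min_le_left _ _
    have heq : e ≤ 1/4 := min_le_right _ _
    set q : EuclideanSpace ℝ (Fin 2) :=
      slitPt (min (max (z 0) e) (1 - e)) (min (max (z 1) e) (1 - e)) with hq
    have hcoord : ∀ i : Fin 2, z i ∈ Set.Icc (0:ℝ) 1 →
        min (max (z i) e) (1 - e) ∈ Set.Ioo (0:ℝ) 1 ∧ |z i - min (max (z i) e) (1 - e)| ≤ e := by
      intro i hi
      refine ⟨⟨lt_min (lt_of_lt_of_le he0 (le_max_right _ _)) (by linarith), ?_⟩, ?_⟩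
      · exact lt_of_le_of_lt (min_le_right _ _) (by linarith)
      · rw [abs_le]
        constructor
        · have : min (max (z i) e) (1 - e) ≤ max (z i) e := min_le_left _ _
          have h2 : max (z i) e ≤ z i + e := max_le (by linarith) (by linarith [hi.1])
          linarith
        · have : z i - e ≤ max (z i) e := le_trans (by linarith) (le_max_left _ _)
          have h2 : z i - e ≤ 1 - e := by linarith [hi.2]
          have := le_min this h2
          linarith
    obtain ⟨hq0, hd0⟩ := hcoord 0 h0
    obtain ⟨hq1, hd1⟩ := hcoord 1 h1
    refine ⟨q, slit_sq_subset ⟨hq0, hq1⟩, ?_⟩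
    rw [slit_dist_eq2]
    have hq00 : q 0 = min (max (z 0) e) (1 - e) := rfl
    have hq11 : q 1 = min (max (z 1) e) (1 - e) := rfl
    rw [hq00, hq11]
    rw [show Real.sqrt ((z 0 - min (max (z 0) e) (1 - e)) ^ 2 +
        (z 1 - min (max (z 1) e) (1 - e)) ^ 2) < ε ↔ _ from Real.sqrt_lt' hε]
    have a0 := abs_le.mp hd0
    have a1 := abs_le.mp hd1
    nlinarith [sq_nonneg (z 0 - min (max (z 0) e) (1 - e)),
      sq_nonneg (z 1 - min (max (z 1) e) (1 - e))]
  · intro hint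
    exact hz (interior_subset hint)

lemma slit_dist_pt (x : EuclideanSpace ℝ (Fin 2)) (a b : ℝ) :
    dist x (slitPt a b) = Real.sqrt ((x 0 - a)^2 + (x 1 - b)^2) := by
  rw [slit_dist_eq2]; rfl

/-- infDist to frontier is at most distance to a nice boundary point -/
lemma slit_infDist_le_pt (x : EuclideanSpace ℝ (Fin 2)) (a b : ℝ) (ha : a ∈ Set.Icc (0:ℝ) 1)
    (hb : b ∈ Set.Icc (0:ℝ) 1) (hnot : slitPt a b ∉ slitSquare) :
    Metric.infDist x (frontier slitSquare) ≤ Real.sqrt ((x 0 - a)^2 + (x 1 - b)^2) := by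
  rw [← slit_dist_pt]
  exact Metric.infDist_le_dist_of_mem (slit_mem_frontier_of _ ha hb hnot)

lemma slit_sqrt_eq_abs' (t : ℝ) : Real.sqrt (t^2 + 0^2) = |t| := by
  simp [Real.sqrt_sq_eq_abs]

/-- The key pointwise Lipschitz estimate. -/
lemma slit_key (x : EuclideanSpace ℝ (Fin 2)) (hx : x ∈ slitSquare)
    (y : EuclideanSpace ℝ (Fin 2))
    (h : dist x y < Metric.infDist x (frontier slitSquare)) :
    |slitFunction x - slitFunction y| ≤ dist x y := by
  obtain ⟨⟨hx0, hx1⟩, hxs⟩ := hx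
  have hc0 := slit_abs_coord_le_dist x y 0
  have hc1 := slit_abs_coord_le_dist x y 1
  have ha0 := abs_le.mp hc0
  have ha1 := abs_le.mp hc1
  by_cases hxQ : x 0 ∈ Set.Ioo (0 : ℝ) 1 ∧ x 1 ∈ Set.Ioo (0 : ℝ) 1
  · by_cases hyQ : y 0 ∈ Set.Ioo (0 : ℝ) 1 ∧ y 1 ∈ Set.Ioo (0 : ℝ) 1
    · simp only [slitFunction, if_pos hxQ, if_pos hyQ]
      exact hc0
    · simp only [slitFunction, if_pos hxQ, if_neg hyQ, sub_zero]
      rcases le_or_gt (y 0) 0 with hy0 | hy0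
      · rw [abs_of_pos hxQ.1.1]; linarith
      · exfalso
        rcases le_or_gt 1 (y 0) with hy01 | hy01
        · have := slit_infDist_le_pt x 1 (x 1) ⟨zero_le_one, le_refl 1⟩
            ⟨hxQ.2.1.le, hxQ.2.2.le⟩ (fun hmem => by
              have h1 : (1:ℝ) < 1 := hmem.1.1.2
              exact absurd h1 (lt_irrefl 1))
          rw [show ((x 0:ℝ) - 1)^2 + ((x 1:ℝ) - x 1)^2 = (x 0 - 1)^2 + 0^2 by ring,
            slit_sqrt_eq_abs', abs_of_neg (by linarith [hxQ.1.2] : (x 0:ℝ) - 1 < 0)] at this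
          linarith
        · have hy1 : y 1 ∉ Set.Ioo (0:ℝ) 1 := fun hy1 => hyQ ⟨⟨hy0, hy01⟩, hy1⟩
          rcases le_or_gt (y 1) 0 with hy10 | hy10
          · have hle := slit_infDist_le_pt x (x 0) 0 ⟨hxQ.1.1.le, hxQ.1.2.le⟩
              ⟨le_refl 0, zero_le_one⟩ (fun hmem => hmem.2 ⟨hxQ.1, rfl⟩)
            rw [show ((x 0:ℝ) - x 0)^2 + ((x 1:ℝ) - 0)^2 = (x 1)^2 + 0^2 by ring,
              slit_sqrt_eq_abs', abs_of_pos hxQ.2.1] at hle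
            linarith
          · have hy11 : 1 ≤ y 1 := by
              by_contra hcon; push_neg at hcon; exact hy1 ⟨hy10, hcon⟩
            have hle := slit_infDist_le_pt x (x 0) 1 ⟨hxQ.1.1.le, hxQ.1.2.le⟩
              ⟨zero_le_one, le_refl 1⟩ (fun hmem => by
                have h1 : (1:ℝ) < 1 := hmem.1.2.2
                exact absurd h1 (lt_irrefl 1))
            rw [show ((x 0:ℝ) - x 0)^2 + ((x 1:ℝ) - 1)^2 = (x 1 - 1)^2 + 0^2 by ring,
              slit_sqrt_eq_abs', abs_of_neg (by linarith [hxQ.2.2] : (x 1:ℝ) - 1 < 0)] at hle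
            linarith
  · by_cases hyQ : y 0 ∈ Set.Ioo (0 : ℝ) 1 ∧ y 1 ∈ Set.Ioo (0 : ℝ) 1
    · simp only [slitFunction, if_neg hxQ, if_pos hyQ, zero_sub, abs_neg]
      rw [abs_of_pos hyQ.1.1]
      rcases le_or_gt (x 0) 0 with hx00 | hx00
      · linarith
      · exfalso
        have hx1' : x 1 ∉ Set.Ioo (0:ℝ) 1 := fun hcon => hxQ ⟨⟨hx00, hx0.2⟩, hcon⟩
        have hx1ne : x 1 ≠ 0 := fun hcon => hxs ⟨⟨hx00, hx0.2⟩, hcon⟩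
        have hx1neg : x 1 < 0 := by
          rcases lt_trichotomy (x 1) 0 with h | h | h
          · exact h
          · exact absurd h hx1ne
          · exact absurd ⟨h, hx1.2⟩ hx1'
        have hle := slit_infDist_le_pt x (x 0) 0 ⟨hx00.le, hx0.2.le⟩
          ⟨le_refl 0, zero_le_one⟩ (fun hmem => hmem.2 ⟨⟨hx00, hx0.2⟩, rfl⟩)
        rw [show ((x 0:ℝ) - x 0)^2 + ((x 1:ℝ) - 0)^2 = (x 1)^2 + 0^2 by ring,
          slit_sqrt_eq_abs', abs_of_neg hx1neg] at hle
        linarith [hyQ.2.1]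
    · simp only [slitFunction, if_neg hxQ, if_neg hyQ, sub_zero, abs_zero]
      exact dist_nonneg

/-- Uniform bound for the singular integral over balls of radius `3`. -/
lemma slit_ball3_bound {α : ℝ} (hα : -2 < α) (hα0 : α < 0) :
    ∃ C : ℝ≥0∞, C < ⊤ ∧ ∀ x : EuclideanSpace ℝ (Fin 2),
      (∫⁻ y in Metric.ball x 3, ENNReal.ofReal (dist x y ^ α)) ≤ C := by
  classical
  set t : ℝ := (1/2:ℝ) ^ (α + 2) with ht
  have ht0 : 0 ≤ t := Real.rpow_nonneg (by norm_num) _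
  have ht1 : t < 1 := Real.rpow_lt_one (by norm_num) (by norm_num) (by linarith)
  set K : ℝ := (3/2:ℝ) ^ α * 9 with hK
  have hK0 : 0 ≤ K := by positivity
  set B : ℝ≥0∞ := volume (Metric.ball (0 : EuclideanSpace ℝ (Fin 2)) 1) with hB
  have hBfin : B < ⊤ := measure_ball_lt_top
  refine ⟨(ENNReal.ofReal K * (1 - ENNReal.ofReal t)⁻¹) * B, ?_, ?_⟩
  · apply ENNReal.mul_lt_top
    · apply ENNReal.mul_lt_top ENNReal.ofReal_lt_top
      rw [ENNReal.inv_lt_top]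
      rw [tsub_pos_iff_lt]
      exact ENNReal.ofReal_lt_one.mpr ht1
    · exact hBfin
  intro x
  set c : ℕ → ℝ := fun n => 3 * (1/2:ℝ) ^ n with hc
  have hcpos : ∀ n, 0 < c n := fun n => by positivity
  set A : ℕ → Set (EuclideanSpace ℝ (Fin 2)) :=
    fun n => {y | c (n+1) ≤ dist x y} ∩ Metric.ball x (c n) with hA
  have hAm : ∀ n, MeasurableSet (A n) := by
    intro n
    exact ((isClosed_le continuous_const (continuous_const.dist continuous_id)).measurableSet).inter
      measurableSet_ball
  have hsub : Metric.ball x 3 ⊆ {x} ∪ ⋃ n, A n := by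
    intro y hy
    by_cases hxy : dist x y = 0
    · left
      have : x = y := by rwa [dist_eq_zero] at hxy
      simp [this.symm]
    · right
      have hd : 0 < dist x y := lt_of_le_of_ne dist_nonneg (Ne.symm hxy)
      have hex : ∃ n, c (n+1) ≤ dist x y := by
        obtain ⟨n, hn⟩ := pow_unbounded_of_one_lt (3 / dist x y) (one_lt_two (α := ℝ))
        refine ⟨n, ?_⟩
        rw [div_lt_iff₀ hd] at hn
        have h2n : (0:ℝ) < 2 ^ n := by positivity
        have hcc : c (n+1) = 3 / (2 ^ n * 2) := by
          simp only [hc, one_div, inv_pow, pow_succ]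
          ring
        rw [hcc, div_le_iff₀ (by positivity)]
        nlinarith [hd.le]
      refine mem_iUnion.mpr ⟨Nat.find hex, Nat.find_spec hex, ?_⟩
      rw [Metric.mem_ball, dist_comm]
      obtain hf | hf := Nat.eq_zero_or_pos (Nat.find hex)
      · rw [hf]
        have : c 0 = 3 := by simp [hc]
        rw [this]
        rw [Metric.mem_ball, dist_comm] at hy
        exact hy
      · have hm : Nat.find hex = (Nat.find hex - 1) + 1 := (Nat.succ_pred_eq_of_pos hf).symm
        have hmin := Nat.find_min hex (m := Nat.find hex - 1) (by omega)
        push_neg at hmin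
        rw [hm]
        exact hmin
  have hident : ∀ n : ℕ, c (n+1) ^ α * (c n) ^ 2 = K * t ^ n := by
    intro n
    have e1 : c (n+1) = (3/2) * (1/2:ℝ) ^ n := by
      simp only [hc, pow_succ]; ring
    have e2 : ((1/2:ℝ) ^ n) ^ α = ((1/2:ℝ) ^ α) ^ n := by
      rw [← Real.rpow_natCast (1/2:ℝ) n, ← Real.rpow_natCast ((1/2:ℝ) ^ α) n,
        ← Real.rpow_mul (by norm_num), ← Real.rpow_mul (by norm_num), mul_comm]
    have e3 : c (n+1) ^ α = (3/2:ℝ) ^ α * ((1/2:ℝ) ^ α) ^ n := by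
      rw [e1, Real.mul_rpow (by norm_num) (by positivity), e2]
    have e4 : (c n) ^ 2 = 9 * ((1/4:ℝ)) ^ n := by
      simp only [hc]
      rw [mul_pow, ← pow_mul, show n * 2 = 2 * n from mul_comm n 2, pow_mul]
      norm_num
    have e5 : t = (1/2:ℝ) ^ α * (1/4) := by
      rw [ht, Real.rpow_add (by norm_num : (0:ℝ) < 1/2)]
      congr 1
      rw [show ((1:ℝ)/2) ^ (2:ℝ) = ((1:ℝ)/2) ^ ((2:ℕ):ℝ) by norm_num, Real.rpow_natCast]
      norm_num
    rw [e3, e4, e5, hK, mul_pow]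
    ring
  calc ∫⁻ y in Metric.ball x 3, ENNReal.ofReal (dist x y ^ α)
      ≤ ∫⁻ y in ({x} ∪ ⋃ n, A n), ENNReal.ofReal (dist x y ^ α) :=
        lintegral_mono' (Measure.restrict_mono hsub le_rfl) (le_refl _)
    _ ≤ (∫⁻ y in ({x} : Set _), ENNReal.ofReal (dist x y ^ α)) +
        ∫⁻ y in (⋃ n, A n), ENNReal.ofReal (dist x y ^ α) := lintegral_union_le _ _ _
    _ ≤ 0 + ∑' n, ∫⁻ y in A n, ENNReal.ofReal (dist x y ^ α) := by
        gcongr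
        · rw [setLIntegral_measure_zero]
          exact measure_singleton x
        · exact lintegral_iUnion_le _ _
    _ ≤ ∑' n, ENNReal.ofReal (c (n+1) ^ α) * (ENNReal.ofReal ((c n) ^ 2) * B) := by
        rw [zero_add]
        apply ENNReal.tsum_le_tsum
        intro n
        calc ∫⁻ y in A n, ENNReal.ofReal (dist x y ^ α)
            ≤ ∫⁻ _ in A n, ENNReal.ofReal (c (n+1) ^ α) := by
              apply setLIntegral_mono' (hAm n)
              intro y hy
              exact ENNReal.ofReal_le_ofReal
                (Real.rpow_le_rpow_of_nonpos (hcpos (n+1)) hy.1 hα0.le)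
          _ = ENNReal.ofReal (c (n+1) ^ α) * volume (A n) := setLIntegral_const _ _
          _ ≤ ENNReal.ofReal (c (n+1) ^ α) * (ENNReal.ofReal ((c n) ^ 2) * B) := by
              gcongr
              calc volume (A n) ≤ volume (Metric.ball x (c n)) :=
                    measure_mono inter_subset_right
                _ = ENNReal.ofReal ((c n) ^ 2) * B := by
                    rw [Measure.addHaar_ball volume x (hcpos n).le, finrank_euclideanSpace_fin]
    _ = (ENNReal.ofReal K * (1 - ENNReal.ofReal t)⁻¹) * B := by
        have : ∀ n : ℕ, ENNReal.ofReal (c (n+1) ^ α) * (ENNReal.ofReal ((c n) ^ 2) * B)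
            = (ENNReal.ofReal K * (ENNReal.ofReal t) ^ n) * B := by
          intro n
          rw [← mul_assoc, ← ENNReal.ofReal_mul (Real.rpow_nonneg (hcpos (n+1)).le _),
            hident n, ENNReal.ofReal_mul hK0, ENNReal.ofReal_pow ht0]
        rw [tsum_congr this, ENNReal.tsum_mul_right, ENNReal.tsum_mul_left,
          ENNReal.tsum_geometric]

lemma slitFunction_mem (z : EuclideanSpace ℝ (Fin 2)) :
    0 ≤ slitFunction z ∧ slitFunction z ≤ 1 := by
  unfold slitFunction
  split_ifs with h
  · exact ⟨h.1.1.le, h.1.2.le⟩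
  · exact ⟨le_refl 0, zero_le_one⟩

lemma slit_infDist_le_three (x : EuclideanSpace ℝ (Fin 2)) (hx : x ∈ slitSquare) :
    Metric.infDist x (frontier slitSquare) ≤ 3 := by
  obtain ⟨⟨hx0, hx1⟩, -⟩ := hx
  have hle := slit_infDist_le_pt x (1/2) 0 ⟨by norm_num, by norm_num⟩
    ⟨le_refl 0, zero_le_one⟩ (fun hmem => hmem.2
      ⟨⟨show (0:ℝ) < 1/2 by norm_num, show (1:ℝ)/2 < 1 by norm_num⟩, rfl⟩)
  refine hle.trans ?_
  calc Real.sqrt ((x 0 - 1/2)^2 + (x 1 - 0)^2) ≤ Real.sqrt 9 := by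
        apply Real.sqrt_le_sqrt
        nlinarith [hx0.1, hx0.2, hx1.1, hx1.2]
    _ = 3 := by
        rw [show (9:ℝ) = 3^2 by norm_num, Real.sqrt_sq (by norm_num)]

lemma slit_volume_lt_top : volume slitSquare < ⊤ := by
  have hsub : slitSquare ⊆ Metric.ball (0 : EuclideanSpace ℝ (Fin 2)) 3 := by
    rintro x ⟨⟨hx0, hx1⟩, -⟩
    rw [Metric.mem_ball, slit_dist_eq2]
    have h0 : (0 : EuclideanSpace ℝ (Fin 2)) 0 = 0 := rfl
    have h1 : (0 : EuclideanSpace ℝ (Fin 2)) 1 = 0 := rfl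
    rw [h0, h1]
    rw [show Real.sqrt ((x 0 - 0)^2 + (x 1 - 0)^2) < 3 ↔ _ from
      Real.sqrt_lt' (by norm_num)]
    nlinarith [hx0.1, hx0.2, hx1.1, hx1.2]
  exact lt_of_le_of_lt (measure_mono hsub) measure_ball_lt_top

/-- On the slit square, `slitFunction` is `1`-Lipschitz inside balls
`B(x, dist(x, ∂G))`; consequently its improved fractional seminorm is finite for all
`1 ≤ p < ∞` and `0 < δ < 1`. -/
theorem slitSquare_improved_seminorm_finite :
    (∀ x ∈ slitSquare, ∀ y ∈ slitSquare,
      dist x y < Metric.infDist x (frontier slitSquare) →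
        |slitFunction x - slitFunction y| ≤ dist x y) ∧
    ∀ p δ : ℝ, 1 ≤ p → δ ∈ Set.Ioo (0 : ℝ) 1 →
      (∫⁻ x in slitSquare,
          ∫⁻ y in Metric.ball x (Metric.infDist x (frontier slitSquare)),
            ENNReal.ofReal
              (|slitFunction x - slitFunction y| ^ p /
                dist x y ^ ((2 : ℝ) + δ * p))) < ∞ := by
  constructor
  · intro x hx y _ h
    exact slit_key x hx y h
  · intro p δ hp hδ
    obtain ⟨hδ0, hδ1⟩ := hδ
    have hp0 : 0 < p := lt_of_lt_of_le one_pos hp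
    set q : ℝ := min p (δ * p + 1) with hqdef
    have hq0 : 0 < q := lt_min hp0 (by positivity)
    have hqp : q ≤ p := min_le_left _ _
    set α : ℝ := q - (2 + δ * p) with hαdef
    have hα : -2 < α := by
      have h1 : δ * p < p := by nlinarith
      have h2 : δ * p < δ * p + 1 := by linarith
      have h3 : δ * p < q := lt_min h1 h2
      rw [hαdef]; linarith
    have hα0 : α < 0 := by
      have h1 : q ≤ δ * p + 1 := min_le_right _ _
      rw [hαdef]; linarith
    obtain ⟨C, hCfin, hC⟩ := slit_ball3_bound hα hα0
    have hmeas : MeasurableSet slitSquare := by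
      apply MeasurableSet.diff
      · exact ((((continuous_apply (0 : Fin 2)).comp (PiLp.continuous_ofLp 2 _)).measurable measurableSet_Ioo).inter
          (((continuous_apply (1 : Fin 2)).comp (PiLp.continuous_ofLp 2 _)).measurable measurableSet_Ioo))
      · exact ((((continuous_apply (0 : Fin 2)).comp (PiLp.continuous_ofLp 2 _)).measurable measurableSet_Ioo).inter
          (((continuous_apply (1 : Fin 2)).comp (PiLp.continuous_ofLp 2 _)).measurable (measurableSet_singleton 0)))
    calc ∫⁻ x in slitSquare,
          ∫⁻ y in Metric.ball x (Metric.infDist x (frontier slitSquare)),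
            ENNReal.ofReal
              (|slitFunction x - slitFunction y| ^ p / dist x y ^ ((2 : ℝ) + δ * p))
        ≤ ∫⁻ _ in slitSquare, C := by
          apply setLIntegral_mono' hmeas
          intro x hx
          calc ∫⁻ y in Metric.ball x (Metric.infDist x (frontier slitSquare)),
                ENNReal.ofReal
                  (|slitFunction x - slitFunction y| ^ p / dist x y ^ ((2 : ℝ) + δ * p))
              ≤ ∫⁻ y in Metric.ball x (Metric.infDist x (frontier slitSquare)),
                ENNReal.ofReal (dist x y ^ α) := by
                apply setLIntegral_mono' measurableSet_ball
                intro y hy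
                rw [Metric.mem_ball, dist_comm] at hy
                have hkey := slit_key x hx y hy
                apply ENNReal.ofReal_le_ofReal
                set b : ℝ := |slitFunction x - slitFunction y| with hb
                have hb0 : 0 ≤ b := abs_nonneg _
                have hb1 : b ≤ 1 := by
                  have h1 := slitFunction_mem x
                  have h2 := slitFunction_mem y
                  rw [hb, abs_le]
                  constructor <;> linarith
                rcases eq_or_lt_of_le (dist_nonneg : (0:ℝ) ≤ dist x y) with hd | hd
                · rw [← hd] at hkey ⊢
                  have hbz : b = 0 := le_antisymm hkey hb0
                  rw [hbz, Real.zero_rpow (ne_of_gt hp0), zero_div]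
                  exact Real.rpow_nonneg (le_refl 0) _
                · have h1 : b ^ p ≤ b ^ q :=
                    Real.rpow_le_rpow_of_exponent_ge' hb0 hb1 hq0.le hqp
                  have h2 : b ^ q ≤ dist x y ^ q := Real.rpow_le_rpow hb0 hkey hq0.le
                  have h3 : dist x y ^ α = dist x y ^ q / dist x y ^ ((2:ℝ) + δ * p) := by
                    rw [hαdef, Real.rpow_sub hd]
                  rw [h3]
                  gcongr
                  exact h1.trans h2
            _ ≤ ∫⁻ y in Metric.ball x 3, ENNReal.ofReal (dist x y ^ α) :=
                lintegral_mono' (Measure.restrict_mono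
                  (Metric.ball_subset_ball (slit_infDist_le_three x hx)) le_rfl) (le_refl _)
            _ ≤ C := hC x
      _ = C * volume slitSquare := setLIntegral_const _ _
      _ < ⊤ := ENNReal.mul_lt_top hCfin slit_volume_lt_top
end

section
/- Let G be a set, let v : G → [0,∞), and for 0 < t₁ < t₂ < ∞ define the truncation v_{t₁}^{t₂}(x) = t₂ − t₁ if v(x) ≥ t₂, v_{t₁}^{t₂}(x) = v(x) − t₁ if t₁ < v(x) < t₂, and v_{t₁}^{t₂}(x) = 0 if v(x) ≤ t₁. For integers i, j, k with i ≤ k ≤ j, if y, z ∈ G satisfy v(y) ≤ 2^i and 2^{j−1} < v(z) ≤ 2^j (or merely v(y) ≤ 2^i and v(z) > 2^{j−1}) with j − 1 > i, then |v_{2^{k−1}}^{2^k}(y) − v_{2^{k−1}}^{2^k}(z)| ≤ 4 · 2^{k−j} |v(y) − v(z)|. -/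
/-- The truncation `v_{t₁}^{t₂}(x) = min (max (v x − t₁) 0) (t₂ − t₁)`. -/
def truncation {α : Type*} (v : α → ℝ) (t₁ t₂ : ℝ) (x : α) : ℝ :=
  min (max (v x - t₁) 0) (t₂ - t₁)

/-- Inequality (4.4): if `v(y) ≤ 2^i` and `v(z) > 2^{j−1}` with `i < j − 1` and
`i ≤ k ≤ j`, then `|v_{2^{k−1}}^{2^k}(y) − v_{2^{k−1}}^{2^k}(z)| ≤ 4·2^{k−j}|v(y) − v(z)|`. -/
theorem truncation_difference_estimate {α : Type*} (v : α → ℝ) (hv : ∀ x, 0 ≤ v x)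
    (i j k : ℤ) (hik : i ≤ k) (hkj : k ≤ j) (hij : i < j - 1)
    (y z : α) (hy : v y ≤ (2 : ℝ) ^ i) (hz : (2 : ℝ) ^ (j - 1) < v z) :
    |truncation v ((2 : ℝ) ^ (k - 1)) ((2 : ℝ) ^ k) y -
        truncation v ((2 : ℝ) ^ (k - 1)) ((2 : ℝ) ^ k) z| ≤
      4 * (2 : ℝ) ^ (k - j) * |v y - v z| := by
  have h2 : (2 : ℝ) ≠ 0 := by norm_num
  have hM : (2 : ℝ) ^ k - (2 : ℝ) ^ (k - 1) = (2 : ℝ) ^ (k - 1) := by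
    have : (2 : ℝ) ^ k = (2 : ℝ) ^ (k - 1) * 2 := by
      rw [← zpow_add_one₀ h2]; ring_nf
    linarith
  have hMpos : (0 : ℝ) < (2 : ℝ) ^ (k - 1) := zpow_pos (by norm_num) _
  have hT : ∀ x, 0 ≤ truncation v ((2 : ℝ) ^ (k - 1)) ((2 : ℝ) ^ k) x ∧
      truncation v ((2 : ℝ) ^ (k - 1)) ((2 : ℝ) ^ k) x ≤ (2 : ℝ) ^ (k - 1) := by
    intro x
    constructor
    · exact le_min (le_max_right _ _) (by rw [hM]; exact hMpos.le)
    · exact (min_le_right _ _).trans_eq hM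
  obtain ⟨hTy0, hTy1⟩ := hT y
  obtain ⟨hTz0, hTz1⟩ := hT z
  have hlhs : |truncation v ((2 : ℝ) ^ (k - 1)) ((2 : ℝ) ^ k) y -
      truncation v ((2 : ℝ) ^ (k - 1)) ((2 : ℝ) ^ k) z| ≤ (2 : ℝ) ^ (k - 1) := by
    rw [abs_sub_le_iff]; constructor <;> linarith
  have hij' : i ≤ j - 2 := by omega
  have hmono : (2 : ℝ) ^ i ≤ (2 : ℝ) ^ (j - 2) :=
    zpow_le_zpow_right₀ (by norm_num) hij'
  have h12 : (2 : ℝ) ^ (j - 1) = 2 * (2 : ℝ) ^ (j - 2) := by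
    rw [mul_comm, ← zpow_add_one₀ h2]; ring_nf
  have hd : (2 : ℝ) ^ (j - 2) ≤ |v y - v z| := by
    rw [abs_sub_comm, abs_of_nonneg (by linarith [zpow_pos (show (0:ℝ) < 2 by norm_num) (j-2)] : 0 ≤ v z - v y)]
    linarith
  have hkjpos : (0 : ℝ) < (2 : ℝ) ^ (k - j) := zpow_pos (by norm_num) _
  have e : (2 : ℝ) ^ (k - 1) = 2 * ((2 : ℝ) ^ (k - j) * (2 : ℝ) ^ (j - 2)) := by
    rw [← zpow_add₀ h2, mul_comm, ← zpow_add_one₀ h2]; ring_nf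
  calc |truncation v ((2 : ℝ) ^ (k - 1)) ((2 : ℝ) ^ k) y -
      truncation v ((2 : ℝ) ^ (k - 1)) ((2 : ℝ) ^ k) z| ≤ (2 : ℝ) ^ (k - 1) := hlhs
    _ ≤ 4 * (2 : ℝ) ^ (k - j) * |v y - v z| := by
        rw [e]; nlinarith [hkjpos, hd, zpow_pos (show (0:ℝ) < 2 by norm_num) (j-2)]
end
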